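/- arXiv:1009.3603 — 5 statements merged into one kernel-verified Lean document; each statement's English description precedes it below -/
import Mathlib

section
/- Let f : [0,∞) → ℝ be continuous and let A ⊂ (0,∞) be a set such that for every t ∈ A there exists α < 1/2 with liminf_{s → t} |f(s)−f(t)| / |t−s|^α > 0. Then almost surely every point of Z(B−f) ∩ A is an isolated point of Z(B−f). -/
open MeasureTheory ProbabilityTheory Filter Set Topology
open scoped ENNReal

/-- `B` is a standard one-dimensional Brownian motion started at `0` under the
probability measure `μ`: it starts at `0`, has continuous paths, Gaussian increments
with mean `0` and variance given by the time increment, and independent increments. -/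
structure IsBrownianMotion {Ω : Type*} [MeasurableSpace Ω]
    (μ : Measure Ω) (B : ℝ → Ω → ℝ) : Prop where
  isProbabilityMeasure : IsProbabilityMeasure μ
  measurable : ∀ t : ℝ, Measurable (B t)
  start : ∀ ω, B 0 ω = 0
  cont_paths : ∀ ω, Continuous fun t => B t ω
  gauss_incr : ∀ s t : ℝ, 0 ≤ s → s ≤ t →
    μ.map (fun ω => B t ω - B s ω) = gaussianReal 0 (Real.toNNReal (t - s))
  indep_incr : ∀ (n : ℕ) (u : ℕ → ℝ), (∀ i, 0 ≤ u i) → Monotone u →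
    iIndepFun
      (fun (i : Fin n) ω => B (u (i.1 + 1)) ω - B (u i.1) ω) μ

/-- The set of zeros of `g` in `(0, ∞)`. -/
def zeroSet (g : ℝ → ℝ) : Set ℝ := {t : ℝ | 0 < t ∧ g t = 0}

/-- `t` is an isolated point of the set `Z ⊆ ℝ`. -/
def IsolatedPointOf (Z : Set ℝ) (t : ℝ) : Prop :=
  t ∈ Z ∧ ∃ ε > 0, ∀ s ∈ Z, |s - t| < ε → s = t

section AuxLemmas
open Real
open scoped NNReal

lemma gauss_tail (v : ℝ≥0) {a : ℝ} (ha : 0 < a) :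
    gaussianReal 0 v {x | a ≤ |x|} ≤ ENNReal.ofReal (2 * Real.exp (-a^2 / (4*v))) := by
  by_cases hv : v = 0
  · subst hv
    rw [gaussianReal_zero_var]
    have h0 : (0:ℝ) ∉ {x : ℝ | a ≤ |x|} := by simp [abs_of_nonneg, not_le, ha]
    rw [Measure.dirac_apply' _ (measurableSet_le measurable_const measurable_abs)]
    simp [h0]
  · have hv0 : (0:ℝ) < v := lt_of_le_of_ne v.2 (by exact_mod_cast (Ne.symm hv))
    rw [gaussianReal_apply_eq_integral 0 hv]
    apply ENNReal.ofReal_le_ofReal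
    set s : Set ℝ := {x | a ≤ |x|}
    have hs : MeasurableSet s := measurableSet_le measurable_const measurable_abs
    set c : ℝ := Real.exp (-a^2/(4*v)) * (Real.sqrt (2 * π * v))⁻¹ with hc
    have hcpos : 0 < c := by positivity
    have hint : Integrable (fun x : ℝ => c * Real.exp (-(1/(4*(v:ℝ))) * x^2)) :=
      ((integrable_exp_neg_mul_sq (by positivity)).const_mul c)
    have hbound : ∀ x ∈ s, gaussianPDFReal 0 v x ≤ c * Real.exp (-(1/(4*(v:ℝ))) * x^2) := by
      intro x hx
      have hx2 : a^2 ≤ x^2 := by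
        rw [← sq_abs x]
        exact pow_le_pow_left₀ ha.le hx 2
      have key : -(x - 0)^2/(2*(v:ℝ)) ≤ -a^2/(4*(v:ℝ)) + (-(1/(4*(v:ℝ))) * x^2) := by
        have e1 : -(1/(4*(v:ℝ))) * x^2 = -x^2/(4*(v:ℝ)) := by field_simp
        rw [e1, div_add_div _ _ (by positivity : (4*(v:ℝ)) ≠ 0) (by positivity : (4*(v:ℝ)) ≠ 0),
          div_le_div_iff₀ (by positivity) (by positivity)]
        nlinarith [mul_le_mul_of_nonneg_right hx2 hv0.le]
      calc gaussianPDFReal 0 v x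
          = (Real.sqrt (2 * π * v))⁻¹ * Real.exp (-(x-0)^2/(2*(v:ℝ))) := rfl
        _ ≤ (Real.sqrt (2 * π * v))⁻¹ *
            Real.exp (-a^2/(4*(v:ℝ)) + (-(1/(4*(v:ℝ))) * x^2)) := by
            have := Real.exp_le_exp.mpr key
            nlinarith [Real.sqrt_nonneg (2*π*(v:ℝ)), Real.exp_pos (-(x-0)^2/(2*(v:ℝ))), inv_nonneg.mpr (Real.sqrt_nonneg (2*π*(v:ℝ)))]
        _ = c * Real.exp (-(1/(4*(v:ℝ))) * x^2) := by
            rw [Real.exp_add, hc]; ring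
    have hsq2 : Real.sqrt 2 ≤ 2 := by
      nlinarith [Real.sqrt_nonneg (2:ℝ), Real.sq_sqrt (show (0:ℝ) ≤ 2 by norm_num)]
    calc ∫ x in s, gaussianPDFReal 0 v x
        ≤ ∫ x in s, c * Real.exp (-(1/(4*(v:ℝ))) * x^2) :=
          setIntegral_mono_on (integrable_gaussianPDFReal 0 v).integrableOn
            hint.integrableOn hs hbound
      _ ≤ ∫ x : ℝ, c * Real.exp (-(1/(4*(v:ℝ))) * x^2) :=
          setIntegral_le_integral hint (ae_of_all _ fun x => by positivity)
      _ = c * Real.sqrt (π / (1/(4*(v:ℝ)))) := by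
          rw [integral_const_mul, integral_gaussian]
      _ ≤ 2 * Real.exp (-a^2 / (4*(v:ℝ))) := by
          have h1 : π / (1/(4*(v:ℝ))) = 2 * (2*π*(v:ℝ)) := by field_simp; ring
          rw [h1, Real.sqrt_mul (by norm_num), hc]
          have h2 : (0:ℝ) < Real.sqrt (2*π*(v:ℝ)) := Real.sqrt_pos.mpr (by positivity)
          have h3 : rexp (-a^2/(4*(v:ℝ))) * (Real.sqrt (2*π*(v:ℝ)))⁻¹ *
              (Real.sqrt 2 * Real.sqrt (2*π*(v:ℝ))) = Real.sqrt 2 * rexp (-a^2/(4*(v:ℝ))) := by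
            field_simp
          rw [h3]
          exact mul_le_mul_of_nonneg_right hsq2 (Real.exp_nonneg _)

lemma summable_aux {ε : ℝ} (hε : 0 < ε) (c : ℝ) :
    Summable (fun n : ℕ => c * 2^n * (2 * Real.exp (-((2:ℝ)^(ε*(n:ℝ))/4)))) := by
  obtain ⟨m, hm⟩ := exists_nat_ge (2/ε)
  have hεm : 2 ≤ ε * m := by
    rw [div_le_iff₀ hε] at hm; linarith [hm]
  have hC : ∀ n : ℕ, |c * 2^n * (2 * Real.exp (-((2:ℝ)^(ε*(n:ℝ))/4)))| ≤
      (|c| * 2 * (m.factorial * 4^m)) * (1/2)^n := by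
    intro n
    set y := (2:ℝ)^(ε*(n:ℝ))/4 with hy_def
    have hy : 0 < y := by positivity
    have h1 : Real.exp (-y) ≤ m.factorial / y^m := by
      calc Real.exp (-y) = (Real.exp y)⁻¹ := Real.exp_neg y
        _ ≤ (y^m / m.factorial)⁻¹ := by
            gcongr
            exact Real.pow_div_factorial_le_exp y hy.le m
        _ = m.factorial / y^m := by rw [inv_div]
    have h2 : y^m = (2:ℝ)^(ε*(n:ℝ)*m)/4^m := by
      rw [hy_def, div_pow, ← Real.rpow_natCast ((2:ℝ)^(ε*(n:ℝ))) m,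
        ← Real.rpow_mul (by norm_num)]
    have h4 : (2:ℝ)^(2*(n:ℝ)) = (4:ℝ)^n := by
      rw [Real.rpow_mul (by norm_num : (0:ℝ) ≤ 2), show ((2:ℝ)^(2:ℝ)) = 4 by
        rw [show (2:ℝ) = ((2:ℕ):ℝ) by norm_num, Real.rpow_natCast]; norm_num,
        Real.rpow_natCast]
    have h3 : (4:ℝ)^n ≤ (2:ℝ)^(ε*(n:ℝ)*m) := by
      rw [← h4]
      exact Real.rpow_le_rpow_of_exponent_le one_le_two
        (by nlinarith [Nat.cast_nonneg (α := ℝ) n])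
    have h5 : Real.exp (-y) ≤ m.factorial * 4^m / 4^n := by
      refine h1.trans ?_
      rw [h2, div_div_eq_mul_div]
      gcongr
    have habs : |c * 2^n * (2*Real.exp (-y))| = |c| * 2^n * (2*Real.exp (-y)) := by
      rw [abs_mul, abs_mul, abs_of_nonneg (by positivity : (0:ℝ) ≤ (2:ℝ)^n),
        abs_of_nonneg (by positivity : (0:ℝ) ≤ 2*Real.exp (-y))]
    rw [habs]
    calc |c| * 2^n * (2*Real.exp (-y))
        ≤ |c| * 2^n * (2*(m.factorial * 4^m / 4^n)) := by gcongr
      _ = (|c| * 2 * (m.factorial * 4^m)) * (1/2)^n := by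
          have h6 : (4:ℝ)^n = 2^n * 2^n := by
            rw [show (4:ℝ) = 2*2 by norm_num, mul_pow]
          rw [h6]
          have h7 : ((1:ℝ)/2)^n = ((2:ℝ)^n)⁻¹ := by rw [one_div, inv_pow]
          rw [h7]
          have h8 : (0:ℝ) < (2:ℝ)^n := by positivity
          field_simp
  apply Summable.of_abs
  apply Summable.of_nonneg_of_le (fun n => abs_nonneg _) hC
  exact (summable_geometric_of_lt_one (by norm_num) (by norm_num)).mul_left _

lemma holder_event {Ω : Type*} [MeasurableSpace Ω] {μ : Measure Ω} {B : ℝ → Ω → ℝ}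
    (hB : IsBrownianMotion μ B) {β : ℝ} (hβ0 : 0 < β) (hβ : β < 1/2) (N : ℕ) :
    ∀ᵐ ω ∂μ, ∃ n₀ : ℕ, ∀ n, n₀ ≤ n → ∀ k : ℕ, k + 1 ≤ N * 2^n →
      |B (((k:ℝ)+1)/2^n) ω - B ((k:ℝ)/2^n) ω| ≤ (2:ℝ) ^ (-β * (n:ℝ)) := by
  set ε : ℝ := 1 - 2*β with hε_def
  have hε : 0 < ε := by rw [hε_def]; linarith
  set a : ℕ → ℝ := fun n => (2:ℝ) ^ (-β * (n:ℝ)) with ha_def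
  have ha_pos : ∀ n, 0 < a n := fun n => Real.rpow_pos_of_pos (by norm_num) _
  set E : ℕ → Set Ω := fun n => ⋃ k ∈ Finset.range (N * 2^n),
    {ω | a n < |B (((k:ℝ)+1)/2^n) ω - B ((k:ℝ)/2^n) ω|} with hE_def
  have hinc : ∀ n k : ℕ, μ {ω | a n < |B (((k:ℝ)+1)/2^n) ω - B ((k:ℝ)/2^n) ω|} ≤
      ENNReal.ofReal (2 * Real.exp (-((2:ℝ)^(ε*(n:ℝ))/4))) := by
    intro n k
    set X : Ω → ℝ := fun ω => B (((k:ℝ)+1)/2^n) ω - B ((k:ℝ)/2^n) ω with hX_def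
    have hXm : Measurable X := (hB.measurable _).sub (hB.measurable _)
    have hdiff : ((k:ℝ)+1)/2^n - (k:ℝ)/2^n = 1/2^n := by ring
    have hlaw : μ.map X = gaussianReal 0 (Real.toNNReal (1/2^n)) := by
      have h := hB.gauss_incr ((k:ℝ)/2^n) (((k:ℝ)+1)/2^n) (by positivity)
        (by gcongr; linarith)
      rw [hdiff] at h
      exact h
    have hms : MeasurableSet {x : ℝ | a n ≤ |x|} :=
      measurableSet_le measurable_const measurable_abs
    have hcoe : ((Real.toNNReal (1/2^n)) : ℝ) = 1/(2:ℝ)^n :=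
      Real.coe_toNNReal _ (by positivity)
    have harg : -(a n)^2 / (4 * ((Real.toNNReal (1/2^n)) : ℝ)) = -((2:ℝ)^(ε*(n:ℝ))/4) := by
      rw [hcoe]
      have ha2 : (a n)^2 = (2:ℝ)^(-β*(n:ℝ)*((2:ℕ):ℝ)) := by
        rw [ha_def, Real.rpow_mul (by norm_num : (0:ℝ) ≤ 2), Real.rpow_natCast]
      have hsplit : (2:ℝ)^(ε*(n:ℝ)) = (2:ℝ)^((n:ℝ)) * (2:ℝ)^(-β*(n:ℝ)*((2:ℕ):ℝ)) := by
        rw [← Real.rpow_add (by norm_num : (0:ℝ) < 2)]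
        congr 1
        push_cast
        rw [hε_def]; ring
      have hn2 : (2:ℝ)^((n:ℝ)) = (2:ℝ)^n := Real.rpow_natCast 2 n
      rw [ha2, hsplit, hn2]
      have h2n : ((2:ℝ)^n) ≠ 0 := by positivity
      field_simp
    calc μ {ω | a n < |X ω|} ≤ μ (X ⁻¹' {x | a n ≤ |x|}) :=
          measure_mono (fun ω (h : a n < |X ω|) => (le_of_lt h : a n ≤ |X ω|))
      _ = gaussianReal 0 (Real.toNNReal (1/2^n)) {x | a n ≤ |x|} := by
          rw [← hlaw, Measure.map_apply hXm hms]
      _ ≤ ENNReal.ofReal (2 * Real.exp (-(a n)^2 / (4 * ((Real.toNNReal (1/2^n)) : ℝ)))) :=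
          gauss_tail _ (ha_pos n)
      _ = ENNReal.ofReal (2 * Real.exp (-((2:ℝ)^(ε*(n:ℝ))/4))) := by rw [harg]
  have hEn : ∀ n, μ (E n) ≤
      ENNReal.ofReal ((N:ℝ) * 2^n * (2 * Real.exp (-((2:ℝ)^(ε*(n:ℝ))/4)))) := by
    intro n
    calc μ (E n) ≤ ∑ k ∈ Finset.range (N*2^n),
          μ {ω | a n < |B (((k:ℝ)+1)/2^n) ω - B ((k:ℝ)/2^n) ω|} :=
          measure_biUnion_finset_le _ _
      _ ≤ ∑ _k ∈ Finset.range (N*2^n),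
          ENNReal.ofReal (2 * Real.exp (-((2:ℝ)^(ε*(n:ℝ))/4))) :=
          Finset.sum_le_sum (fun k _ => hinc n k)
      _ = (N*2^n : ℕ) * ENNReal.ofReal (2 * Real.exp (-((2:ℝ)^(ε*(n:ℝ))/4))) := by
          rw [Finset.sum_const, Finset.card_range, nsmul_eq_mul]
      _ = ENNReal.ofReal ((N:ℝ) * 2^n * (2 * Real.exp (-((2:ℝ)^(ε*(n:ℝ))/4)))) := by
          rw [← ENNReal.ofReal_natCast (N*2^n), ← ENNReal.ofReal_mul (by positivity)]
          congr 1
          push_cast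
          ring
  have htsum : ∑' n, μ (E n) ≠ ∞ := by
    apply ne_top_of_le_ne_top _ (ENNReal.tsum_le_tsum hEn)
    rw [← ENNReal.ofReal_tsum_of_nonneg (fun n => by positivity) (summable_aux hε N)]
    exact ENNReal.ofReal_ne_top
  have hBC := measure_limsup_atTop_eq_zero htsum
  have hae : ∀ᵐ ω ∂μ, ω ∉ limsup E atTop := measure_eq_zero_iff_ae_notMem.mp hBC
  filter_upwards [hae] with ω hω
  rw [mem_limsup_iff_frequently_mem, not_frequently] at hω
  rw [eventually_atTop] at hω
  obtain ⟨n₀, hn₀⟩ := hω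
  refine ⟨n₀, fun n hn k hk => ?_⟩
  have hnotE := hn₀ n hn
  rw [hE_def] at hnotE
  simp only [Set.mem_iUnion, Finset.mem_range, not_exists, Set.mem_setOf_eq] at hnotE
  have hk' : k < N * 2^n := hk
  by_contra hcon
  push_neg at hcon
  exact hnotE k hk' hcon

lemma chaining {g : ℝ → ℝ} (hg : Continuous g) {β : ℝ} (hβ0 : 0 < β) (hβ1 : β < 1)
    (N n₀ : ℕ)
    (H : ∀ n, n₀ ≤ n → ∀ k : ℕ, k + 1 ≤ N * 2^n →
      |g (((k:ℝ)+1)/2^n) - g ((k:ℝ)/2^n)| ≤ (2:ℝ) ^ (-β * (n:ℝ))) :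
    ∃ C, 0 < C ∧ ∀ s t : ℝ, s ∈ Set.Ico (0:ℝ) N → t ∈ Set.Ico (0:ℝ) N →
      |s - t| ≤ ((1:ℝ)/2)^n₀ → |g s - g t| ≤ C * |s - t| ^ β := by
  set r : ℝ := (2:ℝ)^(-β) with hr_def
  have hr0 : 0 < r := Real.rpow_pos_of_pos (by norm_num) _
  have hr1 : r < 1 := Real.rpow_lt_one_of_one_lt_of_neg (by norm_num) (by linarith)
  have hr_eq : ∀ n : ℕ, (2:ℝ)^(-β*(n:ℝ)) = r^n := by
    intro n
    rw [hr_def, Real.rpow_mul (by norm_num : (0:ℝ) ≤ 2), Real.rpow_natCast]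
  set k : ℕ → ℝ → ℕ := fun j t => (⌊t * 2^j⌋).toNat with hk_def
  set D : ℕ → ℝ → ℝ := fun j t => g ((k j t : ℝ) / 2^j) with hD_def
  have hfloor : ∀ (j : ℕ) (t : ℝ), t ∈ Set.Ico (0:ℝ) N →
      (k j t : ℝ) ≤ t * 2^j ∧ t * 2^j < (k j t : ℝ) + 1 ∧ k j t + 1 ≤ N * 2^j := by
    intro j t ht
    have h0 : (0:ℝ) ≤ t * 2^j := by
      have := ht.1; positivity
    have hnn : (0:ℤ) ≤ ⌊t * 2^j⌋ := Int.le_floor.mpr (by exact_mod_cast h0)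
    have hcast : ((k j t : ℕ) : ℝ) = (⌊t * 2^j⌋ : ℝ) := by
      rw [hk_def]; exact_mod_cast Int.toNat_of_nonneg hnn
    have h1 : (k j t : ℝ) ≤ t * 2^j := by rw [hcast]; exact Int.floor_le _
    have h2 : t * 2^j < (k j t : ℝ) + 1 := by rw [hcast]; exact Int.lt_floor_add_one _
    refine ⟨h1, h2, ?_⟩
    have h3 : (k j t : ℝ) < (N:ℝ) * 2^j := by
      refine h1.trans_lt ?_
      have h2j : (0:ℝ) < 2^j := by positivity
      exact mul_lt_mul_of_pos_right ht.2 h2j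
    have h4 : (k j t) < N * 2^j := by exact_mod_cast h3
    omega
  have hlevel : ∀ (j : ℕ) (t : ℝ), t ∈ Set.Ico (0:ℝ) N → n₀ ≤ j + 1 →
      |D (j+1) t - D j t| ≤ r^(j+1) := by
    intro j t ht hj
    obtain ⟨ha1, ha2, ha3⟩ := hfloor j t ht
    obtain ⟨hb1, hb2, hb3⟩ := hfloor (j+1) t ht
    set a := k j t
    set b := k (j+1) t
    have hpow : (2:ℝ)^(j+1) = 2^j * 2 := by ring
    have hab1 : 2*a ≤ b := by
      have hlt : ((2*a : ℕ) : ℝ) < (b:ℝ) + 1 := by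
        push_cast
        calc (2:ℝ)*a ≤ t * 2^j * 2 := by linarith
          _ = t * 2^(j+1) := by rw [hpow]; ring
          _ < b + 1 := hb2
      have : (2*a : ℕ) < b + 1 := by exact_mod_cast hlt
      omega
    have hab2 : b ≤ 2*a + 1 := by
      have hlt : (b:ℝ) < ((2*a + 2 : ℕ) : ℝ) := by
        push_cast
        calc (b:ℝ) ≤ t * 2^(j+1) := hb1
          _ = t * 2^j * 2 := by rw [hpow]; ring
          _ < (a + 1) * 2 := by linarith
          _ = 2*a + 2 := by ring
      have : b < 2*a + 2 := by exact_mod_cast hlt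
      omega
    have heq : ((a:ℝ))/2^j = ((2*a : ℕ):ℝ)/2^(j+1) := by
      push_cast
      rw [hpow]
      field_simp
    rcases (by omega : b = 2*a ∨ b = 2*a + 1) with hb | hb
    · have heq2 : D (j+1) t = D j t := by
        show g ((b:ℝ)/2^(j+1)) = g ((a:ℝ)/2^j)
        rw [hb, ← heq]
      rw [heq2, sub_self, abs_zero]
      positivity
    · have hkey := H (j+1) hj (2*a) (by omega)
      rw [hr_eq (j+1)] at hkey
      show |g ((b:ℝ)/2^(j+1)) - g ((a:ℝ)/2^j)| ≤ r^(j+1)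
      rw [heq, hb]
      push_cast at hkey ⊢
      convert hkey using 3
  -- telescoping
  have htele : ∀ (t : ℝ), t ∈ Set.Ico (0:ℝ) N → ∀ n, n₀ ≤ n → ∀ m, n ≤ m →
      |D m t - D n t| ≤ (r^(n+1) - r^(m+1))/(1-r) := by
    intro t ht n hn m hm
    induction m, hm using Nat.le_induction with
    | base => simp
    | succ m hm ih =>
      have h1 := hlevel m t ht (by omega)
      calc |D (m+1) t - D n t| ≤ |D (m+1) t - D m t| + |D m t - D n t| := abs_sub_le _ _ _
        _ ≤ r^(m+1) + (r^(n+1) - r^(m+1))/(1-r) := add_le_add h1 ih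
        _ = (r^(n+1) - r^(m+1+1))/(1-r) := by
            have h2 : (1:ℝ) - r ≠ 0 := by linarith
            field_simp
            ring
  have hlim : ∀ (t : ℝ), t ∈ Set.Ico (0:ℝ) N → ∀ n, n₀ ≤ n →
      |g t - D n t| ≤ r^(n+1)/(1-r) := by
    intro t ht n hn
    have happ : Tendsto (fun m : ℕ => (k m t : ℝ)/2^m) atTop (𝓝 t) := by
      have hlow : Tendsto (fun m : ℕ => t - ((1:ℝ)/2)^m) atTop (𝓝 (t - 0)) :=
        tendsto_const_nhds.sub (tendsto_pow_atTop_nhds_zero_of_lt_one (by norm_num) (by norm_num))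
      rw [sub_zero] at hlow
      refine tendsto_of_tendsto_of_tendsto_of_le_of_le hlow tendsto_const_nhds ?_ ?_
      · intro m
        obtain ⟨h1, h2, _⟩ := hfloor m t ht
        have h2m : (0:ℝ) < 2^m := by positivity
        have h3 : t < ((k m t:ℝ) + 1)/2^m := (lt_div_iff₀ h2m).mpr h2
        have h4 : ((k m t:ℝ) + 1)/2^m = (k m t:ℝ)/2^m + (1:ℝ)/2^m := by ring
        have h5 : ((1:ℝ)/2)^m = 1/2^m := by rw [div_pow, one_pow]
        show t - ((1:ℝ)/2)^m ≤ (k m t : ℝ)/2^m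
        rw [h5]
        linarith
      · intro m
        obtain ⟨h1, _, _⟩ := hfloor m t ht
        exact (div_le_iff₀ (by positivity)).mpr h1
    have htend : Tendsto (fun m => D m t) atTop (𝓝 (g t)) :=
      (hg.tendsto t).comp happ
    have htabs : Tendsto (fun m => |D m t - D n t|) atTop (𝓝 |g t - D n t|) :=
      ((htend.sub tendsto_const_nhds).abs)
    refine le_of_tendsto htabs ?_
    rw [eventually_atTop]
    refine ⟨n, fun m hm => (htele t ht n hn m hm).trans ?_⟩
    have h2 : (0:ℝ) < 1 - r := by linarith
    gcongr
    have : (0:ℝ) < r^(m+1) := by positivity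
    linarith
  -- same level comparison
  have hsame : ∀ s t : ℝ, s ∈ Set.Ico (0:ℝ) N → t ∈ Set.Ico (0:ℝ) N → ∀ n, n₀ ≤ n →
      s ≤ t → t - s ≤ ((1:ℝ)/2)^n → |D n s - D n t| ≤ r^n := by
    intro s t hs ht n hn hst hd
    obtain ⟨hs1, hs2, hs3⟩ := hfloor n s hs
    obtain ⟨ht1, ht2, ht3⟩ := hfloor n t ht
    have h2n : (0:ℝ) < 2^n := by positivity
    have hmono : k n s ≤ k n t := by
      have : (k n s : ℝ) < (k n t : ℝ) + 1 := by
        calc (k n s : ℝ) ≤ s * 2^n := hs1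
          _ ≤ t * 2^n := by gcongr
          _ < (k n t : ℝ) + 1 := ht2
      exact_mod_cast Nat.lt_add_one_iff.mp (by exact_mod_cast this)
    have hcl : k n t ≤ k n s + 1 := by
      have h5 : ((1:ℝ)/2)^n = 1/2^n := by rw [div_pow, one_pow]
      have : (k n t : ℝ) < (k n s : ℝ) + 2 := by
        calc (k n t : ℝ) ≤ t * 2^n := ht1
          _ ≤ (s + 1/2^n) * 2^n := by gcongr; rw [h5] at hd; linarith
          _ = s * 2^n + 1 := by field_simp
          _ < (k n s : ℝ) + 2 := by linarith
      have : (k n t) < k n s + 2 := by exact_mod_cast this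
      omega
    rcases (by omega : k n t = k n s ∨ k n t = k n s + 1) with hb | hb
    · show |g ((k n s : ℝ)/2^n) - g ((k n t : ℝ)/2^n)| ≤ r^n
      rw [hb, sub_self, abs_zero]
      positivity
    · have hkey := H n hn (k n s) (by omega)
      rw [hr_eq n] at hkey
      show |g ((k n s : ℝ)/2^n) - g ((k n t : ℝ)/2^n)| ≤ r^n
      rw [hb, abs_sub_comm]
      push_cast
      exact hkey
  -- final assembly
  have h1r0 : (0:ℝ) < 1 - r := by linarith
  have hCpos : (0:ℝ) < (2/(1-r) + 1) * (2:ℝ)^β :=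
    mul_pos (by have := div_pos (by norm_num : (0:ℝ) < 2) h1r0; linarith)
      (Real.rpow_pos_of_pos (by norm_num) _)
  refine ⟨(2/(1-r) + 1) * (2:ℝ)^β, hCpos, ?_⟩
  intro s t hs ht hdist
  rcases eq_or_ne s t with rfl | hne
  · simp [Real.zero_rpow hβ0.ne']
  have hd : 0 < |s - t| := abs_pos.mpr (sub_ne_zero.mpr hne)
  set d := |s - t| with hd_def
  have hex : ∃ m : ℕ, ((1:ℝ)/2)^(m+1) < d := by
    obtain ⟨n, hn⟩ := exists_pow_lt_of_lt_one hd (by norm_num : (1:ℝ)/2 < 1)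
    exact ⟨n, lt_of_le_of_lt (pow_le_pow_of_le_one (by norm_num) (by norm_num) (by omega)) hn⟩
  set m := Nat.find hex with hm_def
  have hm : ((1:ℝ)/2)^(m+1) < d := Nat.find_spec hex
  have hm2 : d ≤ ((1:ℝ)/2)^m := by
    rcases Nat.eq_zero_or_pos m with h0 | h0
    · rw [h0, pow_zero]
      calc d ≤ ((1:ℝ)/2)^n₀ := hdist
        _ ≤ 1 := pow_le_one₀ (by norm_num) (by norm_num)
    · have := Nat.find_min hex (show m - 1 < m by omega)
      push_neg at this
      have hmm : m - 1 + 1 = m := by omega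
      rwa [hmm] at this
  have hmn₀ : n₀ ≤ m := by
    by_contra hcon
    push_neg at hcon
    have : ((1:ℝ)/2)^n₀ ≤ ((1:ℝ)/2)^(m+1) :=
      pow_le_pow_of_le_one (by norm_num) (by norm_num) (by omega)
    linarith [hdist, hm]
  -- wlog s ≤ t for hsame use
  have hDd : |D m s - D m t| ≤ r^m := by
    rcases le_total s t with h | h
    · refine hsame s t hs ht m hmn₀ h ?_
      have hts : t - s ≤ d := by rw [hd_def, abs_sub_comm]; exact le_abs_self _
      linarith
    · rw [abs_sub_comm]
      refine hsame t s ht hs m hmn₀ h ?_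
      have hts : s - t ≤ d := by rw [hd_def]; exact le_abs_self _
      linarith
  have hls := hlim s hs m hmn₀
  have hlt := hlim t ht m hmn₀
  have h1r : (0:ℝ) < 1 - r := by linarith
  have hbound : |g s - g t| ≤ (2/(1-r) + 1) * r^m := by
    have h6 : r^(m+1) = r * r^m := by ring
    have h7 : r^(m+1) ≤ r^m := by
      rw [h6]
      nlinarith [pow_pos hr0 m]
    calc |g s - g t| ≤ |g s - D m s| + |D m s - D m t| + |D m t - g t| := by
          have := abs_sub_le (g s) (D m s) (g t)
          have := abs_sub_le (D m s) (D m t) (g t)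
          calc |g s - g t| ≤ |g s - D m s| + |D m s - g t| := abs_sub_le _ _ _
            _ ≤ |g s - D m s| + (|D m s - D m t| + |D m t - g t|) :=
              add_le_add (le_refl _) (abs_sub_le _ _ _)
            _ = _ := by ring
      _ ≤ r^(m+1)/(1-r) + r^m + r^(m+1)/(1-r) := by
          rw [abs_sub_comm (D m t) (g t)]
          gcongr
      _ ≤ r^m/(1-r) + r^m + r^m/(1-r) := by gcongr
      _ = (2/(1-r) + 1) * r^m := by field_simp; ring
  have hrm : r^m < (2:ℝ)^β * d^β := by
    have h12 : ((1:ℝ)/2)^m = (2:ℝ)^(-(m:ℝ)) := by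
      rw [Real.rpow_neg (by norm_num : (0:ℝ) ≤ 2), Real.rpow_natCast, one_div, inv_pow]
    have hstep : r^m = (((1:ℝ)/2)^m)^β := by
      calc r^m = (2:ℝ)^(-β*(m:ℝ)) := (hr_eq m).symm
        _ = ((2:ℝ)^(-(m:ℝ)))^β := by
            rw [← Real.rpow_mul (by norm_num : (0:ℝ) ≤ 2)]
            congr 1
            ring
        _ = (((1:ℝ)/2)^m)^β := by rw [h12]
    have hlt : ((1:ℝ)/2)^m < 2*d := by
      have he : ((1:ℝ)/2)^(m+1) * 2 = ((1:ℝ)/2)^m := by ring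
      linarith [hm]
    calc r^m = (((1:ℝ)/2)^m)^β := hstep
      _ < (2*d)^β := Real.rpow_lt_rpow (by positivity) hlt hβ0
      _ = (2:ℝ)^β * d^β := Real.mul_rpow (by norm_num) (by positivity)
  calc |g s - g t| ≤ (2/(1-r) + 1) * r^m := hbound
    _ ≤ (2/(1-r) + 1) * ((2:ℝ)^β * d^β) := by
        have hc2 : (0:ℝ) ≤ 2/(1-r) + 1 := le_of_lt (by have := div_pos (by norm_num : (0:ℝ) < 2) h1r0; linarith)
        exact mul_le_mul_of_nonneg_left hrm.le hc2
    _ = (2/(1-r) + 1) * (2:ℝ)^β * d^β := by ring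

end AuxLemmas

/-- If at every point `t` of a set `A ⊆ (0,∞)` the continuous drift `f` satisfies a reverse
Hölder condition of some exponent `α < 1/2` (i.e. `liminf_{s → t} |f s - f t|/|t-s|^α > 0`),
then almost surely every zero of `B - f` lying in `A` is an isolated zero. -/
theorem zeros_in_reverse_holder_set_isolated {Ω : Type*} [MeasurableSpace Ω] (μ : Measure Ω) (B : ℝ → Ω → ℝ)
    (hB : IsBrownianMotion μ B)
    (f : ℝ → ℝ) (hf : ContinuousOn f (Set.Ici 0))
    (A : Set ℝ) (hA : A ⊆ Set.Ioi 0)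
    (hrev : ∀ t ∈ A, ∃ α : ℝ, α < 1 / 2 ∧
      0 < Filter.liminf (fun s : ℝ => ((|f s - f t| / |t - s| ^ α : ℝ) : EReal))
        (nhdsWithin t {t}ᶜ)) :
    ∀ᵐ ω ∂μ, ∀ t ∈ A, B t ω - f t = 0 →
      IsolatedPointOf (zeroSet fun s => B s ω - f s) t := by

  -- the a.s. event: Hölder increments at all rational exponents and all horizons
  have hAE : ∀ᵐ ω ∂μ, ∀ q : ℚ, ∀ N : ℕ, (0 < (q:ℝ) ∧ (q:ℝ) < 1/2) →
      ∃ n₀ : ℕ, ∀ n, n₀ ≤ n → ∀ k : ℕ, k + 1 ≤ N * 2^n →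
        |B (((k:ℝ)+1)/2^n) ω - B ((k:ℝ)/2^n) ω| ≤ (2:ℝ) ^ (-(q:ℝ) * (n:ℝ)) := by
    rw [ae_all_iff]
    intro q
    rw [ae_all_iff]
    intro N
    by_cases hq : 0 < (q:ℝ) ∧ (q:ℝ) < 1/2
    · filter_upwards [holder_event hB hq.1 hq.2 N] with ω hω _
      exact hω
    · exact ae_of_all _ (fun ω h => absurd h hq)
  filter_upwards [hAE] with ω hω
  intro t ht hzero
  set g : ℝ → ℝ := fun s => B s ω with hg_def
  have hg : Continuous g := hB.cont_paths ω
  obtain ⟨α, hα, hliminf⟩ := hrev t ht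
  have ht0 : 0 < t := hA ht
  -- choose rational exponent q with max α 0 < q < 1/2
  obtain ⟨q, hq1, hq2⟩ := exists_rat_btwn (show max α 0 < 1/2 by
    apply max_lt hα; norm_num)
  have hq0 : 0 < (q:ℝ) := lt_of_le_of_lt (le_max_right α 0) hq1
  set q1 : ℝ := (max α 0 + q)/2 with hq1_def
  have hαq1 : α ≤ q1 := by
    have := le_max_left α 0
    rw [hq1_def]; linarith [hq1]
  have hq1q : q1 < q := by rw [hq1_def]; linarith [hq1]
  have hq1pos : 0 < q1 := by
    have := le_max_right α 0
    rw [hq1_def]; linarith [hq1, hq0]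
  set e : ℝ := (q:ℝ) - q1 with he_def
  have he : 0 < e := by rw [he_def]; linarith
  set N : ℕ := ⌈t⌉₊ + 1 with hN_def
  have htN : t < N := by
    have := Nat.le_ceil t
    rw [hN_def]; push_cast; linarith
  obtain ⟨n₀, hH⟩ := hω q N ⟨hq0, hq2⟩
  obtain ⟨C, hC, hHold⟩ := chaining hg hq0 (by linarith : (q:ℝ) < 1) N n₀ hH
  -- extract constant from liminf
  obtain ⟨c', hc'1, hc'2⟩ := EReal.exists_between_coe_real hliminf
  have hc'pos : 0 < c' := by exact_mod_cast hc'1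
  have hev : ∀ᶠ s in nhdsWithin t {t}ᶜ,
      (c' : EReal) < ((|f s - f t| / |t - s| ^ α : ℝ) : EReal) :=
    Filter.eventually_lt_of_lt_liminf hc'2
  rw [Filter.eventually_iff, Metric.mem_nhdsWithin_iff] at hev
  obtain ⟨δ₁, hδ₁, hball⟩ := hev
  -- δ₂ such that C * x^e < c' for 0 < x < δ₂
  set δ₂ : ℝ := (c'/(2*C)) ^ (1/e) with hδ₂_def
  have hδ₂pos : 0 < δ₂ := Real.rpow_pos_of_pos (by positivity) _
  set ε : ℝ := min (min δ₁ δ₂) (min (((1:ℝ)/2)^n₀) 1) with hε_def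
  have hεpos : 0 < ε := by
    rw [hε_def]
    have : (0:ℝ) < ((1:ℝ)/2)^n₀ := by positivity
    simp only [lt_min_iff]
    exact ⟨⟨hδ₁, hδ₂pos⟩, this, by norm_num⟩
  refine ⟨⟨ht0, hzero⟩, ε, hεpos, ?_⟩
  rintro s ⟨hs0, hsz⟩ hdist
  by_contra hne
  -- s ≠ t, |s - t| < ε
  have hd0 : 0 < |s - t| := abs_pos.mpr (sub_ne_zero.mpr hne)
  have hd1 : |s - t| < δ₁ := lt_of_lt_of_le hdist (le_trans (min_le_left _ _) (min_le_left _ _))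
  have hd2 : |s - t| < δ₂ := lt_of_lt_of_le hdist (le_trans (min_le_left _ _) (min_le_right _ _))
  have hdn₀ : |s - t| ≤ ((1:ℝ)/2)^n₀ :=
    le_of_lt (lt_of_lt_of_le hdist (le_trans (min_le_right _ _) (min_le_left _ _)))
  have hdone : |s - t| < 1 :=
    lt_of_lt_of_le hdist (le_trans (min_le_right _ _) (min_le_right _ _))
  -- membership in Ico 0 N
  have hsmem : s ∈ Set.Ico (0:ℝ) N := by
    constructor
    · exact hs0.le
    · have h1 : s - t ≤ |s - t| := le_abs_self _
      have h2 := Nat.le_ceil t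
      have h3 : ((⌈t⌉₊:ℝ) + 1) = (N:ℝ) := by rw [hN_def]; push_cast; ring
      linarith [hdone]
  have htmem : t ∈ Set.Ico (0:ℝ) N := ⟨ht0.le, htN⟩
  -- Brownian Hölder bound
  have hgbound : |g s - g t| ≤ C * |s - t| ^ (q:ℝ) := hHold s t hsmem htmem hdn₀
  -- zero set relation: g s = f s, g t = f t
  have hgs : g s = f s := by
    show B s ω = f s
    have h := hsz
    simp only [] at h
    linarith
  have hgt : g t = f t := by
    show B t ω = f t
    linarith [hzero]
  -- reverse Hölder lower bound at s
  have hsball : s ∈ Metric.ball t δ₁ ∩ {t}ᶜ := by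
    constructor
    · rw [Metric.mem_ball, Real.dist_eq]; exact hd1
    · exact fun h => hne h
  have hflow : (c' : EReal) < ((|f s - f t| / |t - s| ^ α : ℝ) : EReal) := hball hsball
  have hflow' : c' < |f s - f t| / |t - s| ^ α := by exact_mod_cast hflow
  have hts_pos : 0 < |t - s| := by rw [abs_sub_comm]; exact hd0
  have hts_rpow : (0:ℝ) < |t - s| ^ α := Real.rpow_pos_of_pos hts_pos _
  have hlower : c' * |t - s| ^ α < |f s - f t| := by
    rw [div_eq_mul_inv] at hflow'
    calc c' * |t - s| ^ α < (|f s - f t| * (|t - s| ^ α)⁻¹) * |t - s| ^ α := by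
          exact mul_lt_mul_of_pos_right hflow' hts_rpow
      _ = |f s - f t| := by field_simp
  -- exponent comparison: |t-s|^q1 ≤ |t-s|^α
  have hexp : |t - s| ^ q1 ≤ |t - s| ^ α := by
    apply Real.rpow_le_rpow_of_exponent_ge hts_pos
    · rw [abs_sub_comm]; exact hdone.le
    · exact hαq1
  -- split: |s-t|^q = |s-t|^e * |s-t|^q1
  have hsplit : |s - t| ^ (q:ℝ) = |s - t| ^ e * |s - t| ^ q1 := by
    rw [← Real.rpow_add hd0]
    congr 1
    rw [he_def]; ring
  -- smallness: C * |s-t|^e < c' / 2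
  have hsmall : C * |s - t| ^ e < c' / 2 := by
    have h1 : |s - t| ^ e < δ₂ ^ e := Real.rpow_lt_rpow (abs_nonneg _) hd2 he
    have h2 : δ₂ ^ e = c'/(2*C) := by
      rw [hδ₂_def, ← Real.rpow_mul (by positivity), one_div, inv_mul_cancel₀ he.ne',
        Real.rpow_one]
    rw [h2] at h1
    calc C * |s - t| ^ e < C * (c'/(2*C)) := by
          exact mul_lt_mul_of_pos_left h1 hC
      _ = c' / 2 := by field_simp
  -- contradiction chain
  have habs_ts : |t - s| = |s - t| := abs_sub_comm t s
  have hchain : |f s - f t| < |f s - f t| := by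
    calc |f s - f t| = |g s - g t| := by rw [hgs, hgt]
      _ ≤ C * |s - t| ^ (q:ℝ) := hgbound
      _ = (C * |s - t| ^ e) * |s - t| ^ q1 := by rw [hsplit]; ring
      _ ≤ (c'/2) * |s - t| ^ q1 := by
          apply mul_le_mul_of_nonneg_right hsmall.le
          positivity
      _ < c' * |s - t| ^ q1 := by
          have : (0:ℝ) < |s - t| ^ q1 := Real.rpow_pos_of_pos hd0 _
          nlinarith [hc'pos]
      _ = c' * |t - s| ^ q1 := by rw [habs_ts]
      _ ≤ c' * |t - s| ^ α := mul_le_mul_of_nonneg_left hexp hc'pos.le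
      _ < |f s - f t| := hlower
  exact absurd hchain (lt_irrefl _)
end

section
/- Let 0 < γ < 1/4 and let C_γ ⊂ [1,2] be the middle (1−2γ)-Cantor set with Cantor function f_γ. Then there exists a constant c > 0 such that for every interval J ⊂ [0,1], the probability that Brownian motion B satisfies B(t) = f_γ(t) for some t ∈ C_γ ∩ f_γ^{-1}(J) is at most c·|J|, where |J| is the length of J. -/
open MeasureTheory ProbabilityTheory Filter Set Topology
open scoped ENNReal

/-- The `n`-th stage of the construction of the middle `(1-2γ)`-Cantor set inside `[1,2]`:
`middleCantorPre γ 0 = [1,2]`, and each stage is obtained from the previous one by applying the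
two affine contractions of ratio `γ` fixing `1` and `2` respectively (this replaces each
component interval by its leftmost and rightmost closed subintervals scaled by `γ`). -/
def middleCantorPre (gamma : ℝ) : ℕ → Set ℝ
  | 0 => Set.Icc 1 2
  | n + 1 => (fun x => 1 + gamma * (x - 1)) '' middleCantorPre gamma n ∪
      (fun x => 2 - gamma * (2 - x)) '' middleCantorPre gamma n

/-- The middle `(1-2γ)`-Cantor set inside `[1,2]`. -/
def middleCantorSet (gamma : ℝ) : Set ℝ := ⋂ n, middleCantorPre gamma n

/-- `f` restricted to `[1,2]` is the Cantor function associated to the middle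
`(1-2γ)`-Cantor set in `[1,2]`: it is the unique continuous function on `[1,2]` satisfying the
self-similarity functional equations (which force `f 1 = 0`, `f 2 = 1`, monotonicity, constancy
on the complementary intervals, and the dyadic values at endpoints of the construction). -/
def IsCantorFunction (gamma : ℝ) (f : ℝ → ℝ) : Prop :=
  ContinuousOn f (Set.Icc 1 2) ∧
  (∀ t ∈ Set.Icc (0 : ℝ) gamma, f (1 + t) = f (1 + t / gamma) / 2) ∧
  (∀ t ∈ Set.Icc gamma (1 - gamma), f (1 + t) = 1 / 2) ∧
  (∀ t ∈ Set.Icc (1 - gamma) 1, f (1 + t) = 1 / 2 + f (1 + (t - (1 - gamma)) / gamma) / 2)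

open scoped NNReal


lemma numeric_sqrt2pi : Real.sqrt (2 * Real.pi) ≤ 5 * Real.exp (-(1:ℝ)/2) := by
  have h1 : (5:ℝ) * Real.exp (-(1:ℝ)/2) = Real.sqrt (25 * Real.exp (-1)) := by
    rw [Real.sqrt_mul (by norm_num), show (-(1:ℝ)/2) = (-1)/2 by norm_num,
      Real.exp_half, show (25:ℝ) = 5^2 by norm_num, Real.sqrt_sq (by norm_num)]
  rw [h1]
  apply Real.sqrt_le_sqrt
  rw [Real.exp_neg]
  rw [show (25:ℝ) * (Real.exp 1)⁻¹ = 25 / Real.exp 1 by ring]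
  rw [le_div_iff₀ (Real.exp_pos 1)]
  nlinarith [Real.pi_lt_d2, Real.exp_one_lt_d9, Real.pi_gt_three, Real.exp_one_gt_d9]

lemma gauss_band (V : ℝ≥0) (h1 : 1 ≤ (V : ℝ)) (A B : ℝ) :
    gaussianReal 0 V (Set.Icc A B) ≤ ENNReal.ofReal (B - A) := by
  have hV : V ≠ 0 := by
    intro h; rw [h] at h1; norm_num at h1
  rw [gaussianReal_apply 0 hV]
  have hpdf : ∀ x : ℝ, gaussianPDF 0 V x ≤ 1 := by
    intro x
    rw [gaussianPDF]
    have h2 : (1:ℝ) ≤ Real.sqrt (2 * Real.pi * V) := by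
      rw [show (1:ℝ) = Real.sqrt 1 by simp]
      apply Real.sqrt_le_sqrt
      nlinarith [Real.pi_gt_three]
    have : gaussianPDFReal 0 V x ≤ 1 := by
      rw [gaussianPDFReal]
      have he : Real.exp (-(x - 0) ^ 2 / (2 * V)) ≤ 1 := by
        apply Real.exp_le_one_iff.2
        have h3 : (0:ℝ) < 2 * (V:ℝ) := by linarith
        apply div_nonpos_of_nonpos_of_nonneg
        · nlinarith [sq_nonneg (x - 0)]
        · linarith
      have hinv : (Real.sqrt (2 * Real.pi * V))⁻¹ ≤ 1 := inv_le_one_of_one_le₀ h2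
      calc (Real.sqrt (2 * Real.pi * V))⁻¹ * Real.exp (-(x - 0) ^ 2 / (2 * V))
          ≤ 1 * 1 := mul_le_mul hinv he (Real.exp_nonneg _) (by norm_num)
        _ = 1 := by norm_num
    calc ENNReal.ofReal (gaussianPDFReal 0 V x) ≤ ENNReal.ofReal 1 := ENNReal.ofReal_le_ofReal this
      _ = 1 := by simp
  calc ∫⁻ x in Set.Icc A B, gaussianPDF 0 V x
      ≤ ∫⁻ _ in Set.Icc A B, 1 := lintegral_mono hpdf
    _ = volume (Set.Icc A B) := by simp
    _ = ENNReal.ofReal (B - A) := by rw [Real.volume_Icc]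

lemma gauss_tail_s12 (V : ℝ≥0) {c : ℝ} (hc : 0 < c) (hcV : Real.sqrt V ≤ c) :
    gaussianReal 0 V {y : ℝ | c ≤ |y|} ≤ ENNReal.ofReal (3/5) := by
  by_cases hV : V = 0
  · rw [hV, gaussianReal_zero_var]
    rw [Measure.dirac_apply' _ (by
      have h : {y : ℝ | c ≤ |y|} = (fun y : ℝ => |y|) ⁻¹' Set.Ici c := rfl
      rw [h]; exact (_root_.continuous_abs.measurable) (measurableSet_Ici))]
    simp only [Set.indicator_apply]
    split_ifs with h
    · simp only [Set.mem_setOf_eq, abs_zero] at h; exfalso; linarith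
    · positivity
  · have hVpos : (0:ℝ) < V := lt_of_le_of_ne V.coe_nonneg (by exact_mod_cast Ne.symm hV)
    have hsqpos : (0:ℝ) < Real.sqrt V := Real.sqrt_pos.2 hVpos
    set s : Set ℝ := Set.Ioo (-(Real.sqrt V)) (Real.sqrt V) with hs
    have hdisj : {y : ℝ | c ≤ |y|} ⊆ sᶜ := by
      intro y hy hys
      rw [hs, Set.mem_Ioo] at hys
      have h1 : |y| < Real.sqrt V := abs_lt.2 ⟨hys.1, hys.2⟩
      exact absurd hy (not_le.2 (lt_of_lt_of_le h1 hcV))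
    have hmeas_s : MeasurableSet s := measurableSet_Ioo
    have hlow : ENNReal.ofReal (2/5) ≤ gaussianReal 0 V s := by
      rw [gaussianReal_apply 0 hV]
      have hpt : ∀ y ∈ s, ENNReal.ofReal (Real.exp (-(1:ℝ)/2) / Real.sqrt (2 * Real.pi * V))
          ≤ gaussianPDF 0 V y := by
        intro y hy
        rw [hs, Set.mem_Ioo] at hy
        rw [gaussianPDF, gaussianPDFReal]
        apply ENNReal.ofReal_le_ofReal
        rw [div_eq_inv_mul]
        apply mul_le_mul_of_nonneg_left _ (by positivity)
        apply Real.exp_le_exp.2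
        have hy2 : y^2 ≤ V := by
          have h2 := abs_lt.2 ⟨hy.1, hy.2⟩
          nlinarith [Real.sq_sqrt (le_of_lt hVpos), abs_nonneg y, sq_abs y]
        rw [sub_zero]
        rw [div_le_div_iff₀ (by norm_num) (by positivity)]
        nlinarith
      calc ENNReal.ofReal (2/5)
          ≤ ENNReal.ofReal (Real.exp (-(1:ℝ)/2) / Real.sqrt (2 * Real.pi * V)) * volume s := by
            rw [hs, Real.volume_Ioo, ← ENNReal.ofReal_mul (by positivity)]
            apply ENNReal.ofReal_le_ofReal
            have hsqrt2 : Real.sqrt (2 * Real.pi * V) = Real.sqrt (2 * Real.pi) * Real.sqrt V :=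
              Real.sqrt_mul (by positivity) _
            have hlen : Real.sqrt V - -(Real.sqrt V) = 2 * Real.sqrt V := by ring
            rw [hsqrt2, hlen]
            have hne : Real.sqrt (V:ℝ) ≠ 0 := ne_of_gt hsqpos
            have hform : Real.exp (-(1:ℝ)/2) / (Real.sqrt (2*Real.pi) * Real.sqrt V) * (2 * Real.sqrt V)
                = (Real.exp (-(1:ℝ)/2) * 2) / Real.sqrt (2*Real.pi) := by
              field_simp
            rw [hform, le_div_iff₀ (by positivity)]
            have h5 := numeric_sqrt2pi
            have hexp : (0:ℝ) < Real.exp (-(1:ℝ)/2) := Real.exp_pos _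
            nlinarith
        _ ≤ ∫⁻ y in s, gaussianPDF 0 V y := by
            rw [← MeasureTheory.setLIntegral_const s _]
            exact setLIntegral_mono (measurable_gaussianPDF 0 V) hpt
    have hcompl : gaussianReal 0 V sᶜ ≤ ENNReal.ofReal (3/5) := by
      rw [measure_compl hmeas_s (measure_ne_top _ s), measure_univ]
      calc 1 - gaussianReal 0 V s ≤ 1 - ENNReal.ofReal (2/5) := tsub_le_tsub_left hlow 1
        _ = ENNReal.ofReal (3/5) := by
            rw [show (1:ℝ≥0∞) = ENNReal.ofReal 1 by simp, ← ENNReal.ofReal_sub _ (by norm_num)]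
            norm_num
    exact le_trans (measure_mono hdisj) hcompl

namespace CantorAux

variable {γ : ℝ} {f : ℝ → ℝ}

/-- word maps -/
def Phi (γ : ℝ) : List Bool → ℝ → ℝ
  | [] => id
  | (b :: w) => (fun x => if b then 2 - γ * (2 - x) else 1 + γ * (x - 1)) ∘ Phi γ w

def kv : List Bool → ℕ
  | [] => 0
  | (b :: w) => (if b then 2 ^ w.length else 0) + kv w

noncomputable def val : List Bool → ℝ
  | [] => 0
  | (b :: w) => (if b then 1/2 else 0) + val w / 2

@[simp] lemma val_nil : val [] = 0 := rfl
@[simp] lemma val_cons (b : Bool) (w : List Bool) :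
    val (b :: w) = (if b then 1/2 else 0) + val w / 2 := rfl

@[simp] lemma kv_nil : kv [] = 0 := rfl
@[simp] lemma kv_cons (b : Bool) (w : List Bool) :
    kv (b :: w) = (if b then 2 ^ w.length else 0) + kv w := rfl


lemma f_mem_Icc (hγ0 : 0 < γ) (hγ : γ < 1/4) (hf : IsCantorFunction γ f) :
    ∀ x ∈ Set.Icc (1:ℝ) 2, f x ∈ Set.Icc (0:ℝ) 1 := by
  obtain ⟨hcont, h0, hmid, h1⟩ := hf
  have hne : (Set.Icc (1:ℝ) 2).Nonempty := ⟨1, by norm_num⟩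
  have hcomp : IsCompact (Set.Icc (1:ℝ) 2) := isCompact_Icc
  obtain ⟨xM, hxM, hmax⟩ := hcomp.exists_isMaxOn hne hcont
  obtain ⟨xm, hxm, hmin⟩ := hcomp.exists_isMinOn hne hcont
  have key : ∀ x ∈ Set.Icc (1:ℝ) 2,
      (∀ y ∈ Set.Icc (1:ℝ) 2, f y ≤ f x) → f x ≤ 1 := by
    intro x hx hmx
    rcases le_or_gt x (1 + γ) with hc1 | hc1
    · -- x = 1 + t, t ∈ [0, γ]
      have ht : x - 1 ∈ Set.Icc (0:ℝ) γ := ⟨by linarith [hx.1], by linarith⟩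
      have heq := h0 (x - 1) ht
      rw [show 1 + (x - 1) = x by ring] at heq
      have hmem : 1 + (x - 1)/γ ∈ Set.Icc (1:ℝ) 2 := by
        constructor
        · have : 0 ≤ (x-1)/γ := div_nonneg ht.1 (le_of_lt hγ0)
          linarith
        · have : (x-1)/γ ≤ 1 := by
            rw [div_le_one hγ0]; exact ht.2
          linarith
      have := hmx _ hmem
      linarith [heq, this]
    rcases le_or_gt x (2 - γ) with hc2 | hc2
    · have ht : x - 1 ∈ Set.Icc γ (1 - γ) := ⟨by linarith, by linarith⟩
      have heq := hmid (x - 1) ht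
      rw [show 1 + (x - 1) = x by ring] at heq
      linarith
    · have ht : x - 1 ∈ Set.Icc (1 - γ) 1 := ⟨by linarith, by linarith [hx.2]⟩
      have heq := h1 (x - 1) ht
      rw [show 1 + (x - 1) = x by ring] at heq
      have hmem : 1 + (x - 1 - (1 - γ))/γ ∈ Set.Icc (1:ℝ) 2 := by
        constructor
        · have : 0 ≤ (x - 1 - (1 - γ))/γ := div_nonneg (by linarith [ht.1]) (le_of_lt hγ0)
          linarith
        · have : (x - 1 - (1 - γ))/γ ≤ 1 := by
            rw [div_le_one hγ0]; linarith [hx.2]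
          linarith
      have := hmx _ hmem
      linarith
  have keym : ∀ x ∈ Set.Icc (1:ℝ) 2,
      (∀ y ∈ Set.Icc (1:ℝ) 2, f x ≤ f y) → 0 ≤ f x := by
    intro x hx hmx
    rcases le_or_gt x (1 + γ) with hc1 | hc1
    · have ht : x - 1 ∈ Set.Icc (0:ℝ) γ := ⟨by linarith [hx.1], by linarith⟩
      have heq := h0 (x - 1) ht
      rw [show 1 + (x - 1) = x by ring] at heq
      have hmem : 1 + (x - 1)/γ ∈ Set.Icc (1:ℝ) 2 := by
        constructor
        · have : 0 ≤ (x-1)/γ := div_nonneg ht.1 (le_of_lt hγ0)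
          linarith
        · have : (x-1)/γ ≤ 1 := by rw [div_le_one hγ0]; exact ht.2
          linarith
      have := hmx _ hmem
      linarith
    rcases le_or_gt x (2 - γ) with hc2 | hc2
    · have ht : x - 1 ∈ Set.Icc γ (1 - γ) := ⟨by linarith, by linarith⟩
      have heq := hmid (x - 1) ht
      rw [show 1 + (x - 1) = x by ring] at heq
      linarith
    · have ht : x - 1 ∈ Set.Icc (1 - γ) 1 := ⟨by linarith, by linarith [hx.2]⟩
      have heq := h1 (x - 1) ht
      rw [show 1 + (x - 1) = x by ring] at heq
      have hmem : 1 + (x - 1 - (1 - γ))/γ ∈ Set.Icc (1:ℝ) 2 := by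
        constructor
        · have : 0 ≤ (x - 1 - (1 - γ))/γ := div_nonneg (by linarith [ht.1]) (le_of_lt hγ0)
          linarith
        · have : (x - 1 - (1 - γ))/γ ≤ 1 := by rw [div_le_one hγ0]; linarith [hx.2]
          linarith
      have := hmx _ hmem
      linarith
  intro x hx
  constructor
  · have h1' := keym xm hxm (fun y hy => hmin hy)
    have := hmin hx
    exact le_trans h1' this
  · have h2' := key xM hxM (fun y hy => hmax hy)
    exact le_trans (hmax hx) h2'

lemma f_phi0 (hγ0 : 0 < γ) (hγ : γ < 1/4) (hf : IsCantorFunction γ f) :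
    ∀ x ∈ Set.Icc (1:ℝ) 2, f (1 + γ * (x - 1)) = f x / 2 := by
  intro x hx
  have ht : γ * (x - 1) ∈ Set.Icc (0:ℝ) γ := by
    constructor
    · exact mul_nonneg (le_of_lt hγ0) (by linarith [hx.1])
    · nlinarith [hx.2]
  have h := hf.2.1 _ ht
  have hdiv : γ * (x - 1) / γ = x - 1 := by field_simp
  rw [hdiv] at h
  rw [show 1 + (x - 1) = x by ring] at h
  exact h

lemma f_phi1 (hγ0 : 0 < γ) (hγ : γ < 1/4) (hf : IsCantorFunction γ f) :
    ∀ x ∈ Set.Icc (1:ℝ) 2, f (2 - γ * (2 - x)) = 1/2 + f x / 2 := by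
  intro x hx
  have ht : 1 - γ * (2 - x) ∈ Set.Icc (1 - γ) 1 := by
    constructor
    · nlinarith [hx.1, hx.2]
    · nlinarith [hx.1, hx.2]
  have h := hf.2.2.2 _ ht
  rw [show 1 + (1 - γ * (2 - x)) = 2 - γ * (2 - x) by ring] at h
  rw [show 1 - γ * (2 - x) - (1 - γ) = γ * (x - 1) by ring] at h
  rw [show γ * (x-1) / γ = x - 1 by field_simp] at h
  rw [show 1 + (x - 1) = x by ring] at h
  exact h

lemma Phi_mem (hγ0 : 0 < γ) (hγ : γ < 1/4) :
    ∀ (w : List Bool), ∀ x ∈ Set.Icc (1:ℝ) 2, Phi γ w x ∈ Set.Icc (1:ℝ) 2 := by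
  intro w
  induction w with
  | nil => intro x hx; simpa [Phi] using hx
  | cons b w ih =>
    intro x hx
    have h1 := ih x hx
    simp only [Phi, Function.comp_apply]
    obtain ⟨ha, hb⟩ := h1
    split_ifs with hbb
    · constructor <;> nlinarith
    · constructor <;> nlinarith

lemma f_Phi (hγ0 : 0 < γ) (hγ : γ < 1/4) (hf : IsCantorFunction γ f) :
    ∀ (w : List Bool), ∀ x ∈ Set.Icc (1:ℝ) 2,
      f (Phi γ w x) = val w + f x / 2 ^ w.length := by
  intro w
  induction w with
  | nil => intro x hx; simp [Phi, val]
  | cons b w ih =>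
    intro x hx
    have hm := Phi_mem hγ0 hγ w x hx
    simp only [Phi, Function.comp_apply, val, List.length_cons]
    split_ifs with hbb
    · rw [f_phi1 hγ0 hγ hf _ hm, ih x hx]
      rw [pow_succ]
      ring
    · rw [f_phi0 hγ0 hγ hf _ hm, ih x hx]
      rw [pow_succ]
      ring

lemma Phi_affine (hγ0 : 0 < γ) :
    ∀ (w : List Bool), ∀ x : ℝ, Phi γ w x = Phi γ w 1 + γ ^ w.length * (x - 1) := by
  intro w
  induction w with
  | nil => intro x; simp [Phi]
  | cons b w ih =>
    intro x
    simp only [Phi, Function.comp_apply, List.length_cons]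
    rw [ih x, ih 1]
    split_ifs with hbb
    · rw [pow_succ]; ring
    · rw [pow_succ]; ring

lemma val_eq_kv : ∀ (w : List Bool), val w = (kv w : ℝ) / 2 ^ w.length ∧ kv w < 2 ^ w.length := by
  intro w
  induction w with
  | nil => simp [val, kv]
  | cons b w ih =>
    obtain ⟨h1, h2⟩ := ih
    constructor
    · simp only [val, kv, List.length_cons, h1]
      push_cast
      rw [pow_succ]
      split_ifs with hbb
      · field_simp
        try ring
      · field_simp
        try ring
    · simp only [kv_cons, List.length_cons, pow_succ]
      split_ifs with hbb <;> omega

lemma kv_inj : ∀ (w w' : List Bool), w.length = w'.length → kv w = kv w' → w = w' := by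
  intro w
  induction w with
  | nil =>
    intro w' hl _
    cases w' with
    | nil => rfl
    | cons b w' => simp at hl
  | cons b w ih =>
    intro w' hl hkv
    cases w' with
    | nil => simp at hl
    | cons b' w' =>
      simp only [List.length_cons, Nat.succ_inj] at hl
      have h2 := (val_eq_kv w).2
      have h2' := (val_eq_kv w').2
      rw [hl] at h2
      simp only [kv_cons] at hkv
      rw [hl] at hkv
      cases b <;> cases b' <;>
        simp only [if_true, if_false, Bool.false_eq_true, zero_add] at hkv
      · rw [ih w' hl (by omega)]
      · exact absurd h2 (by omega)
      · exact absurd h2 (by omega)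
      · rw [ih w' hl (by omega)]

lemma mem_pre (n : ℕ) (t : ℝ) (ht : t ∈ middleCantorPre γ n) :
    ∃ w : List Bool, w.length = n ∧ ∃ x ∈ Set.Icc (1:ℝ) 2, t = Phi γ w x := by
  induction n generalizing t with
  | zero => exact ⟨[], rfl, t, ht, rfl⟩
  | succ n ih =>
    rcases ht with ⟨y, hy, rfl⟩ | ⟨y, hy, rfl⟩
    · obtain ⟨w, hw, x, hx, rfl⟩ := ih y hy
      exact ⟨false :: w, by simp [hw], x, hx, by simp [Phi]⟩
    · obtain ⟨w, hw, x, hx, rfl⟩ := ih y hy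
      exact ⟨true :: w, by simp [hw], x, hx, by simp [Phi]⟩

lemma cover (hγ0 : 0 < γ) (hγ : γ < 1/4) (hf : IsCantorFunction γ f)
    (a b : ℝ) (n : ℕ) (t : ℝ) (ht : t ∈ middleCantorSet γ) (hft : f t ∈ Set.Icc a b) :
    ∃ w : List Bool, w.length = n ∧ (a - (1/2)^n ≤ val w ∧ val w ≤ b) ∧
      t ∈ Set.Icc (Phi γ w 1) (Phi γ w 1 + γ^n) ∧ Phi γ w 1 ∈ Set.Icc (1:ℝ) 2 := by
  have htn : t ∈ middleCantorPre γ n := Set.mem_iInter.1 ht n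
  obtain ⟨w, hw, x, hx, rfl⟩ := mem_pre n _ htn
  have hfx := f_mem_Icc hγ0 hγ hf x hx
  have hfP := f_Phi hγ0 hγ hf w x hx
  have h2n : (0:ℝ) < 2 ^ w.length := by positivity
  refine ⟨w, hw, ⟨?_, ?_⟩, ⟨?_, ?_⟩, ?_⟩
  · have : f (Phi γ w x) ≤ val w + (1/2) ^ w.length := by
      rw [hfP, one_div, inv_pow, ← one_div]
      have : f x / 2 ^ w.length ≤ 1 / 2 ^ w.length := by
        gcongr
        exact hfx.2
      linarith
    rw [hw] at this
    linarith [hft.1]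
  · have : val w ≤ f (Phi γ w x) := by
      rw [hfP]
      have : 0 ≤ f x / 2 ^ w.length := div_nonneg hfx.1 (le_of_lt h2n)
      linarith
    linarith [hft.2]
  · rw [Phi_affine hγ0 w x]
    have : 0 ≤ γ ^ w.length * (x - 1) :=
      mul_nonneg (by positivity) (by linarith [hx.1])
    linarith
  · rw [Phi_affine hγ0 w x, hw]
    have : γ ^ n * (x - 1) ≤ γ ^ n * 1 := by
      apply mul_le_mul_of_nonneg_left (by linarith [hx.2]) (by positivity)
    linarith
  · exact Phi_mem hγ0 hγ w 1 (by norm_num)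

lemma counting (a b : ℝ) (n : ℕ) (ha : 0 ≤ a) (hab : b ≤ a + (1/2)^n) :
    {w : List Bool | w.length = n ∧ a - (1/2)^n ≤ val w ∧ val w ≤ b}.Finite ∧
    {w : List Bool | w.length = n ∧ a - (1/2)^n ≤ val w ∧ val w ≤ b}.ncard ≤ 3 := by
  set V := {w : List Bool | w.length = n ∧ a - (1/2)^n ≤ val w ∧ val w ≤ b} with hV
  set J0 := Nat.floor ((2:ℝ)^n * a) with hJ0
  have hfl : (J0 : ℝ) ≤ 2^n * a := Nat.floor_le (by positivity)
  have hfl2 : (2:ℝ)^n * a < J0 + 1 := Nat.lt_floor_add_one _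
  have hmapsto : ∀ w ∈ V, kv w ∈ (Finset.Icc (J0 - 1) (J0 + 1) : Finset ℕ) := by
    intro w hw
    obtain ⟨hlen, hlow, hhigh⟩ := hw
    obtain ⟨hveq, hvlt⟩ := val_eq_kv w
    rw [hveq, hlen] at hlow hhigh
    have h2n : (0:ℝ) < 2 ^ n := by positivity
    have h12 : (1/2:ℝ)^n * 2^n = 1 := by
      rw [one_div, inv_pow, inv_mul_cancel₀ (ne_of_gt h2n)]
    have e1 : (2:ℝ)^n * a - 1 ≤ kv w := by
      rw [le_div_iff₀ h2n] at hlow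
      nlinarith [hlow]
    have e2 : (kv w : ℝ) ≤ 2^n * a + 1 := by
      rw [div_le_iff₀ h2n] at hhigh
      nlinarith [hab]
    have g1 : J0 ≤ kv w + 1 := by
      have h : (J0 : ℝ) ≤ ((kv w + 1 : ℕ) : ℝ) := by push_cast; linarith
      exact_mod_cast h
    have g2 : kv w ≤ J0 + 1 := by
      have h : (kv w : ℝ) < ((J0 + 2 : ℕ) : ℝ) := by push_cast; linarith
      have := Nat.cast_lt.mp h
      omega
    simp only [Finset.mem_Icc]
    omega
  have hinj : Set.InjOn kv V := by
    intro w hw w' hw' hkv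
    exact kv_inj w w' (by rw [hw.1, hw'.1]) hkv
  have himfin : (kv '' V).Finite :=
    Set.Finite.subset (Finset.Icc (J0-1) (J0+1)).finite_toSet (by
      rintro _ ⟨w, hw, rfl⟩; exact hmapsto w hw)
  have hfin : V.Finite := Set.Finite.of_finite_image himfin hinj
  refine ⟨hfin, ?_⟩
  have h1 : V.ncard = (kv '' V).ncard := (Set.ncard_image_of_injOn hinj).symm
  rw [h1]
  calc (kv '' V).ncard ≤ ((Finset.Icc (J0-1) (J0+1) : Finset ℕ) : Set ℕ).ncard := by
        apply Set.ncard_le_ncard _ (Finset.Icc (J0-1) (J0+1)).finite_toSet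
        rintro _ ⟨w, hw, rfl⟩; exact hmapsto w hw
    _ = (Finset.Icc (J0-1) (J0+1)).card := by rw [Set.ncard_coe_finset]
    _ ≤ 3 := by rw [Nat.card_Icc]; omega

end CantorAux

section Prob
variable {Ω : Type*} [MeasurableSpace Ω] {μ : Measure Ω} {B : ℝ → Ω → ℝ}

lemma finite_hit (hB : IsBrownianMotion μ B) {u v x α β : ℝ}
    (hu : 1 ≤ u) (huv : u ≤ v) (hx : 0 < x) (hxv : Real.sqrt (v - u) ≤ x)
    (F : Finset ℝ) (hF : ↑F ⊆ Set.Icc u v) :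
    μ (⋃ q ∈ F, {ω | B q ω ∈ Set.Icc α β})
      ≤ ENNReal.ofReal ((5/2) * (β - α + 4*x)) := by
  classical
  haveI := hB.isProbabilityMeasure
  set m := F.card with hm
  -- sorted enumeration of F, extended
  set τ : ℕ → ℝ := fun k => if h : k < m then (F.orderIsoOfFin hm.symm ⟨k, h⟩ : ℝ) else v with hτ
  have hτF : ∀ k, k < m → τ k ∈ F := by
    intro k hk
    simp only [hτ, dif_pos hk]
    exact (F.orderIsoOfFin hm.symm ⟨k, hk⟩).2
  have hτmem : ∀ k, τ k ∈ Set.Icc u v := by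
    intro k
    by_cases hk : k < m
    · exact hF (hτF k hk)
    · simp only [hτ, dif_neg hk]
      exact ⟨huv, le_rfl⟩
  have hτsurj : ∀ q ∈ F, ∃ k, k < m ∧ τ k = q := by
    intro q hq
    obtain ⟨k, hk⟩ := (F.orderIsoOfFin hm.symm).surjective ⟨q, hq⟩
    exact ⟨k.1, k.2, by simp only [hτ, dif_pos k.2, Fin.eta, hk]⟩
  have hτmono : Monotone τ := by
    intro k k' hkk
    by_cases hk : k < m <;> by_cases hk' : k' < m
    · simp only [hτ, dif_pos hk, dif_pos hk']
      have := (F.orderIsoOfFin hm.symm).monotone (show (⟨k, hk⟩ : Fin m) ≤ ⟨k', hk'⟩ from hkk)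
      exact_mod_cast this
    · have h1 := (hτmem k).2
      simp only [hτ, dif_neg hk'] at *
      exact h1
    · omega
    · simp only [hτ, dif_neg hk, dif_neg hk']
      exact le_rfl
  have hτm : τ m = v := by simp only [hτ, dif_neg (lt_irrefl m)]
  -- grid
  set g : ℕ → ℝ := fun i => match i with | 0 => 0 | (j+1) => τ j with hg
  have hg0 : g 0 = 0 := rfl
  have hgs : ∀ j, g (j+1) = τ j := fun j => rfl
  have hgnn : ∀ i, 0 ≤ g i := by
    intro i
    match i with
    | 0 => exact le_rfl
    | (j+1) => exact le_trans (by linarith) (hτmem j).1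
  have hgmono : Monotone g := by
    apply monotone_nat_of_le_succ
    intro i
    match i with
    | 0 => exact le_trans (by linarith : (0:ℝ) ≤ u) (hτmem 0).1
    | (j+1) => exact hτmono (Nat.le_succ j)
  set Y : Fin (m+1) → Ω → ℝ := fun i ω => B (g (i.1 + 1)) ω - B (g i.1) ω with hY
  have hYindep : iIndepFun Y μ :=
    hB.indep_incr (m+1) g hgnn hgmono
  have hYmeas : ∀ i, Measurable (Y i) := fun i => (hB.measurable _).sub (hB.measurable _)
  -- telescoping identities
  have hsum1 : ∀ j, j ≤ m → ∀ ω, (∑ i : Fin (m+1), if i.1 ≤ j then Y i ω else 0) = B (τ j) ω := by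
    intro j hj ω
    have h1 : (∑ i : Fin (m+1), if i.1 ≤ j then Y i ω else 0)
        = ∑ t ∈ Finset.range (m+1), (if t ≤ j then B (g (t+1)) ω - B (g t) ω else 0) :=
      Fin.sum_univ_eq_sum_range (fun t => if t ≤ j then B (g (t+1)) ω - B (g t) ω else 0) (m+1)
    rw [h1]
    have h2 : ∀ t ∈ Finset.range (m+1),
        (if t ≤ j then B (g (t+1)) ω - B (g t) ω else 0)
        = B (g (min (t+1) (j+1))) ω - B (g (min t (j+1))) ω := by
      intro t _
      split_ifs with hts
      · rw [min_eq_left (by omega), min_eq_left (by omega)]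
      · rw [min_eq_right (by omega), min_eq_right (by omega), sub_self]
    rw [Finset.sum_congr rfl h2, Finset.sum_range_sub (fun t => B (g (min t (j+1))) ω) (m+1)]
    rw [min_eq_right (by omega), min_eq_left (by omega), hgs, hg0, hB.start, sub_zero]
  have hsum2 : ∀ k, k < m → ∀ ω,
      (∑ i : Fin (m+1), if k < i.1 then Y i ω else 0) = B v ω - B (τ k) ω := by
    intro k hk ω
    have h1 : (∑ i : Fin (m+1), if k < i.1 then Y i ω else 0)
        = ∑ t ∈ Finset.range (m+1), (if k < t then B (g (t+1)) ω - B (g t) ω else 0) :=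
      Fin.sum_univ_eq_sum_range (fun t => if k < t then B (g (t+1)) ω - B (g t) ω else 0) (m+1)
    rw [h1]
    have h2 : ∀ t ∈ Finset.range (m+1),
        (if k < t then B (g (t+1)) ω - B (g t) ω else 0)
        = B (g (max (t+1) (k+1))) ω - B (g (max t (k+1))) ω := by
      intro t _
      split_ifs with hts
      · rw [max_eq_left (by omega), max_eq_left (by omega)]
      · rw [max_eq_right (by omega), max_eq_right (by omega), sub_self]
    rw [Finset.sum_congr rfl h2, Finset.sum_range_sub (fun t => B (g (max t (k+1))) ω) (m+1)]
    rw [max_eq_left (by omega), max_eq_right (by omega), hgs, hgs, hτm]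
  -- events
  set E : ℕ → Set Ω := fun j => if j < m then {ω | B (τ j) ω ∈ Set.Icc α β} else ∅ with hE
  set A : ℕ → Set Ω := fun j => E j \ ⋃ (i : ℕ) (_ : i < j), E i with hA
  set G : ℕ → Set Ω := fun j => {ω | |B v ω - B (τ j) ω| < 2*x} with hG
  have hEmeas : ∀ j, MeasurableSet (E j) := by
    intro j
    simp only [hE]
    split_ifs
    · exact (hB.measurable (τ j)) measurableSet_Icc
    · exact MeasurableSet.empty
  have hAmeas : ∀ j, MeasurableSet (A j) := by
    intro j
    exact (hEmeas j).diff (MeasurableSet.iUnion fun i => MeasurableSet.iUnion fun _ => hEmeas i)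
  have hGmeas : ∀ j, MeasurableSet (G j) := by
    intro j
    have : G j = (fun ω => B v ω - B (τ j) ω) ⁻¹' (Set.Ioo (-(2*x)) (2*x)) := by
      ext ω
      simp only [hG, Set.mem_setOf_eq, Set.mem_preimage, Set.mem_Ioo, abs_lt]
    rw [this]
    exact ((hB.measurable v).sub (hB.measurable (τ j))) measurableSet_Ioo
  have hAdisj : Pairwise (Function.onFun Disjoint A) := by
    intro i j hij
    wlog hlt : i < j generalizing i j
    · exact (this hij.symm (by omega)).symm
    apply Set.disjoint_left.2
    intro ω hωi hωj
    exact hωj.2 (Set.mem_iUnion.2 ⟨i, Set.mem_iUnion.2 ⟨hlt, hωi.1⟩⟩)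
  have hEA : (⋃ j, E j) = ⋃ j, A j := by
    apply Set.Subset.antisymm
    · intro ω hω
      obtain ⟨j₀, hj₀⟩ := Set.mem_iUnion.1 hω
      have hex : ∃ j, ω ∈ E j := ⟨j₀, hj₀⟩
      let k₀ := Nat.find hex
      refine Set.mem_iUnion.2 ⟨k₀, Nat.find_spec hex, ?_⟩
      intro hmem
      obtain ⟨i, hi⟩ := Set.mem_iUnion.1 hmem
      obtain ⟨hik, hωi⟩ := Set.mem_iUnion.1 hi
      exact Nat.find_min hex hik hωi
    · exact Set.iUnion_mono fun j => Set.diff_subset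
  have hFE : (⋃ q ∈ F, {ω | B q ω ∈ Set.Icc α β}) = ⋃ j, E j := by
    apply Set.Subset.antisymm
    · intro ω hω
      obtain ⟨q, hq, hωq⟩ := Set.mem_iUnion₂.1 hω
      obtain ⟨k, hk, hτk⟩ := hτsurj q hq
      refine Set.mem_iUnion.2 ⟨k, ?_⟩
      simp only [hE, if_pos hk, Set.mem_setOf_eq, hτk]
      exact hωq
    · intro ω hω
      obtain ⟨j, hj⟩ := Set.mem_iUnion.1 hω
      by_cases hjm : j < m
      · rw [hE] at hj
        simp only [if_pos hjm] at hj
        exact Set.mem_iUnion₂.2 ⟨τ j, hτF j hjm, hj⟩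
      · rw [hE] at hj; simp only [if_neg hjm] at hj; exact absurd hj (Set.notMem_empty ω)
  -- independence
  have hprod : ∀ k, k < m → μ (A k ∩ G k) = μ (A k) * μ (G k) := by
    intro k hk
    set Sk : Finset (Fin (m+1)) := Finset.univ.filter (fun i => i.1 ≤ k) with hSk
    set Tk : Finset (Fin (m+1)) := Finset.univ.filter (fun i => k < i.1) with hTk
    have hST : Disjoint Sk Tk := by
      rw [Finset.disjoint_left]
      intro i hi1 hi2
      simp only [hSk, hTk, Finset.mem_filter] at hi1 hi2
      omega
    have hbase := hYindep.indepFun_finset Sk Tk hST hYmeas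
    set VS : Ω → (Sk → ℝ) := fun ω i => Y i ω with hVS
    set VT : Ω → (Tk → ℝ) := fun ω i => Y i ω with hVT
    set σfun : ℕ → ((Sk → ℝ) → ℝ) := fun j y => ∑ i : Sk, if (i : Fin (m+1)).1 ≤ j then y i else 0
      with hσfun
    have hσmeas : ∀ j, Measurable (σfun j) := by
      intro j
      apply Finset.measurable_sum
      intro i _
      split_ifs
      · exact measurable_pi_apply i
      · exact measurable_const
    have hσ : ∀ j, j ≤ k → ∀ ω, σfun j (VS ω) = B (τ j) ω := by
      intro j hj ω
      rw [hσfun]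
      simp only [hVS]
      rw [Finset.sum_coe_sort Sk (fun i => if i.1 ≤ j then Y i ω else 0)]
      rw [hSk, Finset.sum_filter]
      rw [← hsum1 j (by omega) ω]
      apply Finset.sum_congr rfl
      intro i _
      by_cases h1 : i.1 ≤ k <;> by_cases h2 : i.1 ≤ j <;> simp [h1, h2] <;> omega
    set ψ : (Tk → ℝ) → ℝ := fun y => ∑ i : Tk, y i with hψdef
    have hψmeas : Measurable ψ := Finset.measurable_sum _ (fun i _ => measurable_pi_apply i)
    have hψ : ∀ ω, ψ (VT ω) = B v ω - B (τ k) ω := by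
      intro ω
      rw [hψdef]
      simp only [hVT]
      rw [Finset.sum_coe_sort Tk (fun i => Y i ω)]
      rw [hTk, ← hsum2 k hk ω, Finset.sum_filter]
    have hID : IndepFun VS (fun ω => B v ω - B (τ k) ω) μ := by
      have h := hbase.comp measurable_id hψmeas
      have heq : (ψ ∘ VT) = fun ω => B v ω - B (τ k) ω := funext hψ
      rw [show (id ∘ VS) = VS from rfl, heq] at h
      exact h
    -- express A k as preimage
    set MS : Set (Sk → ℝ) :=
      {y | σfun k y ∈ Set.Icc α β} \ ⋃ (j : ℕ) (_ : j < k), {y | σfun j y ∈ Set.Icc α β} with hMS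
    have hMSmeas : MeasurableSet MS := by
      apply MeasurableSet.diff
      · exact (hσmeas k) measurableSet_Icc
      · exact MeasurableSet.iUnion fun j => MeasurableSet.iUnion fun _ =>
          (hσmeas j) measurableSet_Icc
    have hAk : A k = VS ⁻¹' MS := by
      rw [hA, hMS]
      ext ω
      simp only [Set.mem_diff, Set.mem_preimage, Set.mem_iUnion, Set.mem_setOf_eq]
      constructor
      · rintro ⟨h1, h2⟩
        constructor
        · rw [hσ k le_rfl ω]
          rw [hE] at h1
          simpa only [if_pos hk, Set.mem_setOf_eq] using h1
        · rintro ⟨j, hjk, hj⟩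
          apply h2
          refine ⟨j, hjk, ?_⟩
          rw [hE]
          simp only [if_pos (by omega : j < m), Set.mem_setOf_eq]
          rw [← hσ j (by omega) ω]
          exact hj
      · rintro ⟨h1, h2⟩
        constructor
        · rw [hE]
          simp only [if_pos hk, Set.mem_setOf_eq]
          rw [← hσ k le_rfl ω]
          exact h1
        · rintro ⟨j, hjk, hj⟩
          apply h2
          refine ⟨j, hjk, ?_⟩
          rw [hE] at hj
          simp only [if_pos (by omega : j < m), Set.mem_setOf_eq] at hj
          rw [hσ j (by omega) ω]
          exact hj
    have hGk : G k = (fun ω => B v ω - B (τ k) ω) ⁻¹' (Set.Ioo (-(2*x)) (2*x)) := by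
      ext ω
      simp only [hG, Set.mem_setOf_eq, Set.mem_preimage, Set.mem_Ioo, abs_lt]
    rw [hAk, hGk]
    exact hID.measure_inter_preimage_eq_mul _ _ hMSmeas measurableSet_Ioo
  -- lower bound on μ (G k)
  have hGlow : ∀ k, k < m → ENNReal.ofReal (2/5) ≤ μ (G k) := by
    intro k hk
    have hΔmeas : Measurable (fun ω => B v ω - B (τ k) ω) :=
      (hB.measurable v).sub (hB.measurable (τ k))
    have hcompl : μ (G k)ᶜ ≤ ENNReal.ofReal (3/5) := by
      have hGc : (G k)ᶜ = (fun ω => B v ω - B (τ k) ω) ⁻¹' {r : ℝ | 2*x ≤ |r|} := by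
        ext ω
        simp only [hG, Set.mem_compl_iff, Set.mem_setOf_eq, Set.mem_preimage, not_lt]
      rw [hGc, ← Measure.map_apply hΔmeas]
      · rw [hB.gauss_incr (τ k) v (le_trans (by linarith) (hτmem k).1) (hτmem k).2]
        apply gauss_tail_s12 _ (by linarith)
        have h1 : ((Real.toNNReal (v - τ k)) : ℝ) ≤ v - u := by
          rw [Real.coe_toNNReal']
          apply max_le
          · linarith [(hτmem k).1]
          · linarith
        calc Real.sqrt ((Real.toNNReal (v - τ k)) : ℝ) ≤ Real.sqrt (v - u) :=
              Real.sqrt_le_sqrt h1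
          _ ≤ x := hxv
          _ ≤ 2*x := by linarith
      · have : {r : ℝ | 2*x ≤ |r|} = (fun r : ℝ => |r|) ⁻¹' (Set.Ici (2*x)) := rfl
        rw [this]
        exact continuous_abs.measurable measurableSet_Ici
    have h1 : μ (G k) = 1 - μ (G k)ᶜ := by
      rw [measure_compl (hGmeas k) (measure_ne_top _ _), measure_univ]
      rw [ENNReal.sub_sub_cancel ENNReal.one_ne_top (prob_le_one)]
    rw [h1]
    calc ENNReal.ofReal (2/5) = 1 - ENNReal.ofReal (3/5) := by
          rw [show (1:ℝ≥0∞) = ENNReal.ofReal 1 by simp, ← ENNReal.ofReal_sub _ (by norm_num)]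
          norm_num
      _ ≤ 1 - μ (G k)ᶜ := tsub_le_tsub_left hcompl 1
  -- the inclusion into the terminal event
  set Hv : Set Ω := {ω | B v ω ∈ Set.Icc (α - 2*x) (β + 2*x)} with hHv
  have hAG : ∀ k, k < m → A k ∩ G k ⊆ Hv := by
    intro k hk ω hω
    obtain ⟨hωA, hωG⟩ := hω
    have h1 : ω ∈ E k := hωA.1
    rw [hE] at h1
    simp only [if_pos hk, Set.mem_setOf_eq] at h1
    rw [hG] at hωG
    simp only [Set.mem_setOf_eq, abs_lt] at hωG
    simp only [hHv, Set.mem_setOf_eq, Set.mem_Icc]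
    constructor <;> [linarith [h1.1, hωG.1]; linarith [h1.2, hωG.2]]
  have hHvbound : μ Hv ≤ ENNReal.ofReal (β - α + 4*x) := by
    have hBv : μ.map (B v) = gaussianReal 0 (Real.toNNReal v) := by
      have h := hB.gauss_incr 0 v le_rfl (by linarith)
      have heq : (fun ω => B v ω - B 0 ω) = B v := by
        funext ω; rw [hB.start ω, sub_zero]
      rw [heq] at h
      rw [h, sub_zero]
    have : μ Hv = (μ.map (B v)) (Set.Icc (α - 2*x) (β + 2*x)) := by
      rw [Measure.map_apply (hB.measurable v) measurableSet_Icc]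
      rfl
    rw [this, hBv]
    calc gaussianReal 0 (Real.toNNReal v) (Set.Icc (α - 2*x) (β + 2*x))
        ≤ ENNReal.ofReal ((β + 2*x) - (α - 2*x)) := by
          apply gauss_band
          rw [Real.coe_toNNReal _ (by linarith)]
          linarith
      _ = ENNReal.ofReal (β - α + 4*x) := by ring_nf
  -- final chain
  rw [hFE, hEA, measure_iUnion hAdisj hAmeas]
  have htsum : ∑' j, μ (A j) = ∑ j ∈ Finset.range m, μ (A j) := by
    apply tsum_eq_sum
    intro j hj
    have hjm : ¬ j < m := by simpa using hj
    have : A j = ∅ := by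
      apply Set.eq_empty_of_subset_empty
      calc A j ⊆ E j := Set.diff_subset
        _ = ∅ := by simp only [hE, if_neg hjm]
    rw [this, measure_empty]
  rw [htsum]
  have hmain : (∑ j ∈ Finset.range m, μ (A j)) * ENNReal.ofReal (2/5)
      ≤ ENNReal.ofReal (β - α + 4*x) := by
    rw [Finset.sum_mul]
    calc ∑ j ∈ Finset.range m, μ (A j) * ENNReal.ofReal (2/5)
        ≤ ∑ j ∈ Finset.range m, μ (A j ∩ G j) := by
          apply Finset.sum_le_sum
          intro j hj
          have hjm : j < m := Finset.mem_range.1 hj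
          rw [hprod j hjm]
          exact mul_le_mul_right (hGlow j hjm) _
      _ = μ (⋃ j ∈ Finset.range m, A j ∩ G j) := by
          rw [measure_biUnion_finset]
          · intro i hi j hj hij
            exact Disjoint.mono Set.inter_subset_left Set.inter_subset_left (hAdisj hij)
          · intro j _
            exact (hAmeas j).inter (hGmeas j)
      _ ≤ μ Hv := by
          apply measure_mono
          apply Set.iUnion₂_subset
          intro j hj
          exact hAG j (Finset.mem_range.1 hj)
      _ ≤ ENNReal.ofReal (β - α + 4*x) := hHvbound
  have h25 : ENNReal.ofReal (2/5) * ENNReal.ofReal (5/2) = 1 := by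
    rw [← ENNReal.ofReal_mul (by norm_num)]
    norm_num
  calc ∑ j ∈ Finset.range m, μ (A j)
      = (∑ j ∈ Finset.range m, μ (A j)) * (ENNReal.ofReal (2/5) * ENNReal.ofReal (5/2)) := by
        rw [h25, mul_one]
    _ = ((∑ j ∈ Finset.range m, μ (A j)) * ENNReal.ofReal (2/5)) * ENNReal.ofReal (5/2) := by
        rw [mul_assoc]
    _ ≤ ENNReal.ofReal (β - α + 4*x) * ENNReal.ofReal (5/2) := mul_le_mul_left hmain _
    _ = ENNReal.ofReal ((5/2) * (β - α + 4*x)) := by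
        rw [← ENNReal.ofReal_mul' (by norm_num)]
        ring_nf

lemma interval_hit (hB : IsBrownianMotion μ B) {u v x α β : ℝ}
    (hu : 1 ≤ u) (huv : u < v) (hx : 0 < x) (hxv : Real.sqrt (v - u) ≤ x) :
    μ {ω | ∃ t ∈ Set.Icc u v, B t ω ∈ Set.Icc α β}
      ≤ ENNReal.ofReal ((5/2) * (β - α + 4*x)) := by
  apply ENNReal.le_of_forall_pos_le_add
  intro ε' hε' _
  set ε : ℝ := (ε' : ℝ) / 5 with hε
  have hεpos : 0 < ε := by positivity
  -- countable dense set
  set D : Set ℝ := Set.Icc u v ∩ Set.range (fun q : ℚ => (q : ℝ)) with hD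
  have hDc : D.Countable := (Set.countable_range _).mono Set.inter_subset_right
  have hDne : D.Nonempty := by
    obtain ⟨q, hq1, hq2⟩ := exists_rat_btwn huv
    exact ⟨(q : ℝ), ⟨le_of_lt hq1, le_of_lt hq2⟩, ⟨q, rfl⟩⟩
  obtain ⟨e, he⟩ := hDc.exists_eq_range hDne
  have heD : ∀ k, e k ∈ Set.Icc u v := by
    intro k
    have : e k ∈ D := by rw [he]; exact ⟨k, rfl⟩
    exact this.1
  set S : ℕ → Set Ω := fun k => {ω | B (e k) ω ∈ Set.Icc (α - ε) (β + ε)} with hS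
  have hsub : {ω | ∃ t ∈ Set.Icc u v, B t ω ∈ Set.Icc α β} ⊆ ⋃ k, S k := by
    intro ω hω
    obtain ⟨t, ht, hBt⟩ := hω
    have hcont : ContinuousAt (fun s => B s ω) t := (hB.cont_paths ω).continuousAt
    rw [Metric.continuousAt_iff] at hcont
    obtain ⟨δ, hδpos, hδ⟩ := hcont ε hεpos
    -- find a rational q ∈ [u, v] with |q - t| < δ
    have hq : ∃ q : ℚ, (q : ℝ) ∈ Set.Icc u v ∧ |(q : ℝ) - t| < δ := by
      rcases lt_or_eq_of_le ht.2 with htv | htv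
      · obtain ⟨q, hq1, hq2⟩ := exists_rat_btwn (show t < min v (t + δ) by
          apply lt_min htv; linarith)
        refine ⟨q, ⟨le_trans ht.1 (le_of_lt hq1), le_of_lt (lt_of_lt_of_le hq2 (min_le_left _ _))⟩, ?_⟩
        have := lt_of_lt_of_le hq2 (min_le_right _ _)
        rw [abs_lt]; constructor <;> linarith
      · obtain ⟨q, hq1, hq2⟩ := exists_rat_btwn (show max u (v - δ) < v by
          apply max_lt huv; linarith)
        refine ⟨q, ⟨le_trans (le_max_left _ _) (le_of_lt hq1), le_of_lt hq2⟩, ?_⟩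
        have h3 := lt_of_le_of_lt (le_max_right u (v - δ)) hq1
        rw [abs_lt]
        constructor <;> rw [htv] <;> linarith
    obtain ⟨q, hqIcc, hqδ⟩ := hq
    have hqD : (q : ℝ) ∈ D := ⟨hqIcc, ⟨q, rfl⟩⟩
    rw [he] at hqD
    obtain ⟨k, hk⟩ := hqD
    refine Set.mem_iUnion.2 ⟨k, ?_⟩
    have hclose : dist (B (e k) ω) (B t ω) < ε := by
      apply hδ
      rw [Real.dist_eq, hk]
      exact hqδ
    rw [Real.dist_eq, abs_lt] at hclose
    simp only [hS, Set.mem_setOf_eq, Set.mem_Icc]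
    constructor <;> [linarith [hBt.1, hclose.2]; linarith [hBt.2, hclose.1]]
  calc μ {ω | ∃ t ∈ Set.Icc u v, B t ω ∈ Set.Icc α β}
      ≤ μ (⋃ k, S k) := measure_mono hsub
    _ = ⨆ N, μ (Set.accumulate S N) := measure_iUnion_eq_iSup_accumulate
    _ ≤ ENNReal.ofReal ((5/2) * ((β + ε) - (α - ε) + 4*x)) := by
        apply iSup_le
        intro N
        set FN : Finset ℝ := (Finset.range (N+1)).image e with hFN
        have hacc : Set.accumulate S N
            = ⋃ q ∈ FN, {ω | B q ω ∈ Set.Icc (α - ε) (β + ε)} := by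
          ext ω
          simp only [Set.mem_accumulate, hS, Set.mem_setOf_eq, Set.mem_iUnion]
          constructor
          · rintro ⟨k, hk, h⟩
            exact ⟨e k, Finset.mem_image_of_mem e (Finset.mem_range.2 (by omega)), h⟩
          · rintro ⟨r, hr, h⟩
            obtain ⟨k, hk, rfl⟩ := Finset.mem_image.1 hr
            exact ⟨k, by simp only [Finset.mem_range] at hk; omega, h⟩
        rw [hacc]
        apply finite_hit hB hu (le_of_lt huv) hx hxv FN
        intro r hr
        obtain ⟨k, _, rfl⟩ := Finset.mem_image.1 hr
        exact heD k
    _ ≤ ENNReal.ofReal ((5/2) * (β - α + 4*x)) + ε' := by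
        have harith : (5/2) * ((β + ε) - (α - ε) + 4*x)
            = (5/2) * (β - α + 4*x) + (ε' : ℝ) := by rw [hε]; ring
        rw [harith]
        calc ENNReal.ofReal ((5/2) * (β - α + 4*x) + (ε' : ℝ))
            ≤ ENNReal.ofReal ((5/2) * (β - α + 4*x)) + ENNReal.ofReal (ε' : ℝ) :=
              ENNReal.ofReal_add_le
          _ = ENNReal.ofReal ((5/2) * (β - α + 4*x)) + ε' := by
              rw [ENNReal.ofReal_coe_nnreal]

end Prob

/-- For `0 < γ < 1/4` there is `c > 0` such that for every interval `J = [a,b] ⊆ [0,1]`,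
the probability that Brownian motion meets the graph of the Cantor function `f` over
`C_γ ∩ f⁻¹(J)` is at most `c·|J|`. -/
theorem hitting_prob_preimage_le {Ω : Type*} [MeasurableSpace Ω] (μ : Measure Ω) (B : ℝ → Ω → ℝ)
    (hB : IsBrownianMotion μ B)
    (γ : ℝ) (hγ0 : 0 < γ) (hγ : γ < 1 / 4)
    (f : ℝ → ℝ) (hf : IsCantorFunction γ f) :
    ∃ c : ℝ, 0 < c ∧ ∀ a b : ℝ, 0 ≤ a → a ≤ b → b ≤ 1 →
      μ {ω | ∃ t ∈ middleCantorSet γ ∩ f ⁻¹' Set.Icc a b, B t ω = f t}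
        ≤ ENNReal.ofReal (c * (b - a)) := by
  classical
  refine ⟨76, by norm_num, ?_⟩
  intro a b ha hab hb1
  set Ev := {ω | ∃ t ∈ middleCantorSet γ ∩ f ⁻¹' Set.Icc a b, B t ω = f t} with hEv
  have MainEst : ∀ n : ℕ, b - a ≤ (1/2:ℝ)^n →
      μ Ev ≤ ENNReal.ofReal (38 * (1/2)^n) := by
    intro n hn
    have hhalfpos : (0:ℝ) < (1/2:ℝ)^n := by positivity
    set V := {w : List Bool | w.length = n ∧ a - (1/2)^n ≤ CantorAux.val w ∧ CantorAux.val w ≤ b}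
      with hV
    obtain ⟨hVfin, hVcard⟩ := CantorAux.counting a b n ha (by linarith)
    set Evw : List Bool → Set Ω := fun w =>
      {ω | ∃ t ∈ Set.Icc (CantorAux.Phi γ w 1) (CantorAux.Phi γ w 1 + γ^n),
        B t ω ∈ Set.Icc a b} with hEvw
    have hsub : Ev ⊆ ⋃ w ∈ V, Evw w := by
      rintro ω ⟨t, ⟨htC, htf⟩, hBt⟩
      obtain ⟨w, hwlen, hwval, htw, hPhi12⟩ :=
        CantorAux.cover hγ0 hγ hf a b n t htC htf
      refine Set.mem_iUnion₂.2 ⟨w, ⟨hwlen, hwval⟩, ⟨t, htw, ?_⟩⟩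
      rw [hBt]; exact htf
    have hbound : ∀ w ∈ V, μ (Evw w) ≤ ENNReal.ofReal ((25/2) * (1/2)^n) := by
      intro w hw
      have hP12 := CantorAux.Phi_mem hγ0 hγ w 1 (by norm_num)
      have hu : (1:ℝ) ≤ CantorAux.Phi γ w 1 := hP12.1
      have hγn : (0:ℝ) < γ^n := by positivity
      have hxv : Real.sqrt ((CantorAux.Phi γ w 1 + γ^n) - CantorAux.Phi γ w 1) ≤ (1/2:ℝ)^n := by
        rw [show (CantorAux.Phi γ w 1 + γ^n) - CantorAux.Phi γ w 1 = γ^n by ring]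
        have h1 : γ^n ≤ ((1/2:ℝ)^n)^2 := by
          rw [← pow_mul, show n*2 = 2*n by ring, pow_mul]
          apply pow_le_pow_left₀ (le_of_lt hγ0)
          norm_num
          linarith
        calc Real.sqrt (γ^n) ≤ Real.sqrt (((1/2:ℝ)^n)^2) := Real.sqrt_le_sqrt h1
          _ = (1/2:ℝ)^n := Real.sqrt_sq (by positivity)
      calc μ (Evw w)
          ≤ ENNReal.ofReal ((5/2) * (b - a + 4*(1/2)^n)) :=
            interval_hit hB hu (by linarith) hhalfpos hxv
        _ ≤ ENNReal.ofReal ((25/2) * (1/2)^n) := by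
            apply ENNReal.ofReal_le_ofReal
            nlinarith
    calc μ Ev ≤ μ (⋃ w ∈ hVfin.toFinset, Evw w) := by
          apply measure_mono
          refine hsub.trans ?_
          apply Set.iUnion₂_subset
          intro w hw
          exact Set.subset_iUnion₂ (s := fun w _ => Evw w) w (hVfin.mem_toFinset.2 hw)
      _ ≤ ∑ w ∈ hVfin.toFinset, μ (Evw w) := measure_biUnion_finset_le _ _
      _ ≤ hVfin.toFinset.card • ENNReal.ofReal ((25/2) * (1/2)^n) := by
          apply Finset.sum_le_card_nsmul
          intro w hw
          exact hbound w (hVfin.mem_toFinset.1 hw)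
      _ ≤ 3 • ENNReal.ofReal ((25/2) * (1/2)^n) := by
          have hcard : hVfin.toFinset.card ≤ 3 := by
            rw [← Set.ncard_eq_toFinset_card _ hVfin]
            exact hVcard
          rw [nsmul_eq_mul, nsmul_eq_mul]
          apply mul_le_mul_left
          exact_mod_cast Nat.cast_le.2 hcard
      _ ≤ ENNReal.ofReal (38 * (1/2)^n) := by
          rw [nsmul_eq_mul]
          rw [show ((3:ℕ):ℝ≥0∞) = ENNReal.ofReal 3 by simp]
          rw [← ENNReal.ofReal_mul (by norm_num)]
          apply ENNReal.ofReal_le_ofReal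
          nlinarith
  rcases eq_or_lt_of_le hab with heq | hlt
  · have h0 : ∀ n : ℕ, μ Ev ≤ ENNReal.ofReal (38 * (1/2)^n) := by
      intro n
      apply MainEst
      rw [← heq]
      simp only [sub_self]
      positivity
    have htend : Filter.Tendsto (fun n : ℕ => ENNReal.ofReal (38 * (1/2:ℝ)^n))
        Filter.atTop (nhds 0) := by
      have h1 : Filter.Tendsto (fun n : ℕ => 38 * (1/2:ℝ)^n) Filter.atTop (nhds 0) := by
        have := (tendsto_pow_atTop_nhds_zero_of_lt_one
          (by norm_num : (0:ℝ) ≤ 1/2) (by norm_num : (1/2:ℝ) < 1)).const_mul (38:ℝ)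
        simpa using this
      have h2 := (ENNReal.continuous_ofReal.tendsto 0).comp h1
      simpa only [ENNReal.ofReal_zero, Function.comp_def] using h2
    have hle0 : μ Ev ≤ 0 := ge_of_tendsto' htend h0
    calc μ Ev ≤ 0 := hle0
      _ ≤ ENNReal.ofReal (76 * (b - a)) := zero_le
  · have hbapos : (0:ℝ) < b - a := by linarith
    have hex : ∃ n : ℕ, (1/2:ℝ)^(n+1) < b - a := by
      obtain ⟨n₀, hn₀⟩ := exists_pow_lt_of_lt_one hbapos (by norm_num : (1/2:ℝ) < 1)
      exact ⟨n₀, lt_of_le_of_lt (by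
        apply pow_le_pow_of_le_one <;> norm_num) hn₀⟩
    set n := Nat.find hex with hn
    have hspec : (1/2:ℝ)^(n+1) < b - a := Nat.find_spec hex
    have hupper : b - a ≤ (1/2:ℝ)^n := by
      match hnn : n with
      | 0 => calc b - a ≤ 1 := by linarith
               _ = (1/2:ℝ)^0 := by norm_num
      | (k+1) =>
        have hmin : ¬ ((1/2:ℝ)^(k+1) < b - a) := Nat.find_min hex (by omega)
        push_neg at hmin
        exact hmin
    calc μ Ev ≤ ENNReal.ofReal (38 * (1/2)^n) := MainEst n hupper
      _ ≤ ENNReal.ofReal (76 * (b - a)) := by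
          apply ENNReal.ofReal_le_ofReal
          have : 38 * (1/2:ℝ)^n = 76 * (1/2:ℝ)^(n+1) := by ring
          nlinarith [hspec, this]
end

section
/- Let f : [0,∞) → ℝ be continuous and set X(t) = B(t) − f(t). Then almost surely no point of the zero set Z(X) = {t > 0 : X(t) = 0} is a local extremum of X, i.e. almost surely there is no t > 0 with X(t) = 0 such that X attains a local maximum or a local minimum at t. -/
open MeasureTheory ProbabilityTheory Filter Set Topology
open scoped ENNReal

namespace NoZeroExtremumAux

/-! ### Dyadic points of `[p, q]` -/

/-- The `j`-th dyadic point of level `k` in `[p, q]` (clamped at `q`). -/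
noncomputable def dy (p q : ℝ) (k j : ℕ) : ℝ := min (p + (q - p) * j / 2 ^ k) q

/-- All dyadic points of `[p, q]`, indexed by a single natural number. -/
noncomputable def pt (p q : ℝ) (n : ℕ) : ℝ := dy p q n.unpair.1 n.unpair.2

lemma dy_mem {p q : ℝ} (hpq : p ≤ q) (k j : ℕ) : dy p q k j ∈ Set.Icc p q := by
  constructor
  · refine le_min (le_add_of_nonneg_right ?_) hpq
    exact div_nonneg (mul_nonneg (sub_nonneg.mpr hpq) (Nat.cast_nonneg j)) (by positivity)
  · exact min_le_right _ _

lemma pt_mem {p q : ℝ} (hpq : p ≤ q) (n : ℕ) : pt p q n ∈ Set.Icc p q := dy_mem hpq _ _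

lemma dy_zero {p q : ℝ} (hpq : p ≤ q) (k : ℕ) : dy p q k 0 = p := by
  simp [dy, min_eq_left hpq]

lemma dy_succ_level (p q : ℝ) (k j : ℕ) : dy p q k j = dy p q (k + 1) (2 * j) := by
  have h : (q - p) * ((2 * j : ℕ) : ℝ) / 2 ^ (k + 1) = (q - p) * j / 2 ^ k := by
    push_cast
    ring
  rw [dy, dy, h]

lemma dy_mono_j {p q : ℝ} (hpq : p ≤ q) (k : ℕ) : Monotone (dy p q k) := by
  intro j j' hj
  refine min_le_min ?_ le_rfl
  have hle : (j:ℝ) ≤ (j':ℝ) := by exact_mod_cast hj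
  have hqp : (0:ℝ) ≤ q - p := sub_nonneg.mpr hpq
  gcongr

lemma dy_big {p q : ℝ} (hpq : p ≤ q) {k j : ℕ} (h : 2 ^ k ≤ j) : dy p q k j = q := by
  have h2 : (0:ℝ) < 2 ^ k := by positivity
  have hj : ((2:ℝ) ^ k) ≤ (j : ℝ) := by exact_mod_cast h
  apply min_eq_right
  have : q - p ≤ (q - p) * j / 2 ^ k := by
    rw [le_div_iff₀ h2]
    nlinarith [sub_nonneg.mpr hpq]
  linarith

lemma pt_dense {p q : ℝ} (hpq : p < q) {t : ℝ} (ht : t ∈ Set.Icc p q) {δ : ℝ} (hδ : 0 < δ) :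
    ∃ n : ℕ, |pt p q n - t| < δ := by
  have hqp : (0:ℝ) < q - p := sub_pos.mpr hpq
  obtain ⟨k, hk⟩ : ∃ k : ℕ, (q - p) / δ < 2 ^ k := pow_unbounded_of_one_lt _ one_lt_two
  have h2 : (0:ℝ) < 2 ^ k := by positivity
  have hkδ : (q - p) / 2 ^ k < δ := by
    rw [div_lt_iff₀ h2]
    rw [div_lt_iff₀ hδ] at hk
    nlinarith
  set j : ℕ := ⌊(t - p) * 2 ^ k / (q - p)⌋₊ with hj_def
  have htp : 0 ≤ t - p := sub_nonneg.mpr ht.1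
  have hfl : (j : ℝ) ≤ (t - p) * 2 ^ k / (q - p) :=
    Nat.floor_le (by positivity)
  have hfl' : (t - p) * 2 ^ k / (q - p) < j + 1 := Nat.lt_floor_add_one _
  have h1 : (j:ℝ) * (q - p) ≤ (t - p) * 2 ^ k := (le_div_iff₀ hqp).mp hfl
  have h1' : (t - p) * 2 ^ k < ((j:ℝ) + 1) * (q - p) := (div_lt_iff₀ hqp).mp hfl'
  have hd_le : p + (q - p) * j / 2 ^ k ≤ t := by
    have h2' : (q - p) * (j:ℝ) / 2 ^ k ≤ t - p := by
      rw [div_le_iff₀ h2]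
      nlinarith
    linarith
  have hd_gt : t - (p + (q - p) * j / 2 ^ k) < (q - p) / 2 ^ k := by
    have h3 : t - p < (q - p) * j / 2 ^ k + (q - p) / 2 ^ k := by
      rw [← add_div, lt_div_iff₀ h2]
      nlinarith
    linarith
  have hd_eq : dy p q k j = p + (q - p) * j / 2 ^ k :=
    min_eq_left (hd_le.trans ht.2)
  refine ⟨Nat.pair k j, ?_⟩
  have hpt : pt p q (Nat.pair k j) = dy p q k j := by
    simp [pt, Nat.unpair_pair]
  rw [hpt, hd_eq, abs_sub_lt_iff]
  constructor
  · have : 0 ≤ (q - p) * j / 2 ^ k := by positivity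
    linarith
  · linarith

/-! ### Measurability of countable suprema of real-valued functions -/

lemma measurable_ciSup_nat {α : Type*} {m : MeasurableSpace α} {a : ℕ → α → ℝ}
    (ha : ∀ n, Measurable[m] (a n)) (hbdd : ∀ x, BddAbove (Set.range fun n => a n x)) :
    Measurable[m] (fun x => ⨆ n, a n x) := by
  -- partial maxima
  let M : ℕ → α → ℝ := fun k => Nat.rec (a 0) (fun k Mk => fun x => max (Mk x) (a (k + 1) x)) k
  have hM_meas : ∀ k, Measurable[m] (M k) := by
    intro k
    induction k with
    | zero => exact ha 0
    | succ k ih => exact ih.max (ha (k + 1))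
  have hM_le : ∀ k x, M k x ≤ ⨆ n, a n x := by
    intro k
    induction k with
    | zero => exact fun x => le_ciSup (hbdd x) 0
    | succ k ih => exact fun x => max_le (ih x) (le_ciSup (hbdd x) (k + 1))
  have ha_le : ∀ n x, a n x ≤ M n x := by
    intro n
    induction n with
    | zero => exact fun x => le_rfl
    | succ n _ => exact fun x => le_max_right _ _
  have hM_mono : ∀ x, Monotone fun k => M k x := by
    intro x
    refine monotone_nat_of_le_succ fun k => le_max_left _ _
  have hM_bdd : ∀ x, BddAbove (Set.range fun k => M k x) := by
    intro x
    exact ⟨⨆ n, a n x, by rintro y ⟨k, rfl⟩; exact hM_le k x⟩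
  have hsup_eq : ∀ x, (⨆ k, M k x) = ⨆ n, a n x := by
    intro x
    apply le_antisymm
    · exact ciSup_le fun k => hM_le k x
    · exact ciSup_le fun n => (ha_le n x).trans (le_ciSup (hM_bdd x) n)
  have htendsto : Tendsto M atTop (𝓝 fun x => ⨆ n, a n x) := by
    rw [tendsto_pi_nhds]
    intro x
    have := tendsto_atTop_ciSup (hM_mono x) (hM_bdd x)
    rwa [hsup_eq x] at this
  exact measurable_of_tendsto_metrizable hM_meas htendsto

/-! ### The σ-algebra generated by the increments after time `p` -/

variable {Ω : Type*} [MeasurableSpace Ω] {μ : Measure Ω} {B : ℝ → Ω → ℝ}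

/-- The σ-algebra generated by the increments `B s - B p` for `s` a dyadic point of `[p,q]`. -/
noncomputable def incSigma (B : ℝ → Ω → ℝ) (p q : ℝ) : MeasurableSpace Ω :=
  ⨆ n : ℕ, MeasurableSpace.comap (fun ω => B (pt p q n) ω - B p ω) inferInstance

lemma incSigma_le (hB : IsBrownianMotion μ B) (p q : ℝ) :
    incSigma B p q ≤ ‹MeasurableSpace Ω› :=
  iSup_le fun _ => ((hB.measurable _).sub (hB.measurable _)).comap_le

lemma indep_H (hB : IsBrownianMotion μ B) {p q : ℝ} (hp : 0 < p) (hpq : p < q) (k : ℕ) :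
    Indep (MeasurableSpace.comap (B p) inferInstance)
      (⨆ j : ℕ, MeasurableSpace.comap (fun ω => B (dy p q k j) ω - B p ω) inferInstance) μ := by
  classical
  haveI := hB.isProbabilityMeasure
  set u : ℕ → ℝ := fun i => if i = 0 then 0 else dy p q k (i - 1) with hu_def
  have hu_succ : ∀ m : ℕ, u (m + 1) = dy p q k m := by
    intro m; simp [hu_def]
  have hu0 : ∀ i, 0 ≤ u i := by
    intro i
    rcases Nat.eq_zero_or_pos i with h | h
    · simp [hu_def, h]
    · obtain ⟨m, rfl⟩ := Nat.exists_eq_add_of_lt h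
      rw [zero_add, hu_succ]
      exact le_trans hp.le (dy_mem hpq.le k m).1
  have humono : Monotone u := by
    refine monotone_nat_of_le_succ fun i => ?_
    rcases Nat.eq_zero_or_pos i with h | h
    · subst h
      rw [hu_succ 0, dy_zero hpq.le]
      simp [hu_def, hp.le]
    · obtain ⟨m, rfl⟩ := Nat.exists_eq_add_of_lt h
      rw [zero_add, hu_succ, hu_succ]
      exact dy_mono_j hpq.le k (Nat.le_succ m)
  have hYind : iIndep (fun i : Fin (2 ^ k + 1) =>
      MeasurableSpace.comap (fun ω => B (u (i.1 + 1)) ω - B (u i.1) ω) inferInstance) μ :=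
    (hB.indep_incr (2 ^ k + 1) u hu0 humono).iIndep
  have h_le : ∀ i : Fin (2 ^ k + 1),
      MeasurableSpace.comap (fun ω => B (u (i.1 + 1)) ω - B (u i.1) ω) inferInstance
        ≤ ‹MeasurableSpace Ω› :=
    fun i => ((hB.measurable _).sub (hB.measurable _)).comap_le
  have hcompl := indep_biSup_compl h_le hYind {0}
  -- identify the left σ-algebra with `comap (B p)`
  have hY0 : (fun ω => B (u ((0 : Fin (2 ^ k + 1)).1 + 1)) ω - B (u (0 : Fin (2 ^ k + 1)).1) ω)
      = B p := by
    funext ω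
    have h1 : u 1 = p := by rw [hu_succ 0, dy_zero hpq.le]
    have h0 : u 0 = 0 := by simp [hu_def]
    simp only [Fin.val_zero, h1, h0, hB.start ω, sub_zero]
  have hleft : (⨆ i ∈ ({0} : Set (Fin (2 ^ k + 1))),
      MeasurableSpace.comap (fun ω => B (u (i.1 + 1)) ω - B (u i.1) ω) inferInstance)
      = MeasurableSpace.comap (B p) inferInstance := by
    rw [iSup_singleton, hY0]
  rw [hleft] at hcompl
  -- the right σ-algebra contains all the increments from `p`
  set m' : MeasurableSpace Ω := ⨆ i ∈ ({0} : Set (Fin (2 ^ k + 1)))ᶜ,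
      MeasurableSpace.comap (fun ω => B (u (i.1 + 1)) ω - B (u i.1) ω) inferInstance with hm'_def
  have hW : ∀ i : ℕ, Measurable[m'] (fun ω => B (dy p q k (i + 1)) ω - B (dy p q k i) ω) := by
    intro i
    rcases lt_or_ge i (2 ^ k) with hi | hi
    · have hmem : (⟨i + 1, by omega⟩ : Fin (2 ^ k + 1)) ∈ ({0} : Set (Fin (2 ^ k + 1)))ᶜ := by
        simp [Fin.ext_iff]
      have hle : MeasurableSpace.comap
          (fun ω => B (u ((⟨i + 1, by omega⟩ : Fin (2 ^ k + 1)).1 + 1)) ω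
            - B (u (⟨i + 1, by omega⟩ : Fin (2 ^ k + 1)).1) ω) inferInstance ≤ m' :=
        le_iSup₂ (f := fun (i : Fin (2 ^ k + 1)) (_ : i ∈ ({0} : Set (Fin (2 ^ k + 1)))ᶜ) =>
          MeasurableSpace.comap (fun ω => B (u (i.1 + 1)) ω - B (u i.1) ω) inferInstance)
          _ hmem
      have hmeas := (comap_measurable
        (fun ω => B (u ((⟨i + 1, by omega⟩ : Fin (2 ^ k + 1)).1 + 1)) ω
          - B (u (⟨i + 1, by omega⟩ : Fin (2 ^ k + 1)).1) ω)).mono hle le_rfl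
      simpa only [hu_succ] using hmeas
    · have h1 : dy p q k (i + 1) = q := dy_big hpq.le (by omega)
      have h2 : dy p q k i = q := dy_big hpq.le hi
      have : (fun ω => B (dy p q k (i + 1)) ω - B (dy p q k i) ω) = fun _ => (0:ℝ) := by
        funext ω; rw [h1, h2, sub_self]
      rw [this]
      exact measurable_const
  have htel : ∀ j : ℕ, Measurable[m'] (fun ω => B (dy p q k j) ω - B p ω) := by
    intro j
    induction j with
    | zero =>
      have : (fun ω => B (dy p q k 0) ω - B p ω) = fun _ => (0:ℝ) := by
        funext ω; rw [dy_zero hpq.le, sub_self]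
      rw [this]; exact measurable_const
    | succ j ih =>
      have : (fun ω => B (dy p q k (j + 1)) ω - B p ω)
          = fun ω => (B (dy p q k (j + 1)) ω - B (dy p q k j) ω) + (B (dy p q k j) ω - B p ω) := by
        funext ω; ring
      rw [this]
      exact (hW j).add ih
  have hright : (⨆ j : ℕ, MeasurableSpace.comap
      (fun ω => B (dy p q k j) ω - B p ω) inferInstance) ≤ m' :=
    iSup_le fun j => (htel j).comap_le
  exact indep_of_indep_of_le_right hcompl hright

lemma indep_incSigma (hB : IsBrownianMotion μ B) {p q : ℝ} (hp : 0 < p) (hpq : p < q) :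
    Indep (MeasurableSpace.comap (B p) inferInstance) (incSigma B p q) μ := by
  haveI := hB.isProbabilityMeasure
  set H : ℕ → MeasurableSpace Ω := fun k =>
    ⨆ j : ℕ, MeasurableSpace.comap (fun ω => B (dy p q k j) ω - B p ω) inferInstance with hH_def
  have hH_le : ∀ k, H k ≤ ‹MeasurableSpace Ω› :=
    fun k => iSup_le fun j => ((hB.measurable _).sub (hB.measurable _)).comap_le
  have hH_mono : Monotone H := by
    refine monotone_nat_of_le_succ fun k => ?_
    refine iSup_le fun j => ?_
    rw [dy_succ_level p q k j]
    exact le_iSup (fun j' => MeasurableSpace.comap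
      (fun ω => B (dy p q (k + 1) j') ω - B p ω) inferInstance) (2 * j)
  have hk : ∀ k, Indep (H k) (MeasurableSpace.comap (B p) inferInstance) μ :=
    fun k => (indep_H hB hp hpq k).symm
  have hsup : Indep (⨆ k, H k) (MeasurableSpace.comap (B p) inferInstance) μ :=
    indep_iSup_of_monotone hk hH_le (hB.measurable p).comap_le hH_mono
  have hGle : incSigma B p q ≤ ⨆ k, H k := by
    refine iSup_le fun n => ?_
    refine le_trans ?_ (le_iSup H n.unpair.1)
    exact le_iSup (fun j => MeasurableSpace.comap
      (fun ω => B (dy p q n.unpair.1 j) ω - B p ω) inferInstance) n.unpair.2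
  exact indep_of_indep_of_le_right hsup.symm hGle

/-- Key probabilistic fact: `B p` is atomless and independent of the increments after `p`,
so it almost never equals any function of those increments. -/
lemma key (hB : IsBrownianMotion μ B) {p q : ℝ} (hp : 0 < p) (hpq : p < q) {Y : Ω → ℝ}
    (hY : Measurable[incSigma B p q] Y) : μ {ω | B p ω = Y ω} = 0 := by
  haveI := hB.isProbabilityMeasure
  have hYm : Measurable Y := hY.mono (incSigma_le hB p q) le_rfl
  have hIndep : IndepFun Y (B p) μ := by
    rw [IndepFun_iff_Indep]
    exact (indep_of_indep_of_le_right (indep_incSigma hB hp hpq) hY.comap_le).symm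
  have hmap : μ.map (B p) = gaussianReal 0 (Real.toNNReal p) := by
    have h := hB.gauss_incr 0 p le_rfl hp.le
    have heq : (fun ω => B p ω - B 0 ω) = B p := by
      funext ω; rw [hB.start ω, sub_zero]
    rwa [heq, sub_zero] at h
  have hv : Real.toNNReal p ≠ 0 := ne_of_gt (Real.toNNReal_pos.mpr hp)
  have hs : MeasurableSet {x : ℝ × ℝ | x.1 = x.2} :=
    (isClosed_eq continuous_fst continuous_snd).measurableSet
  have hset : {ω | B p ω = Y ω} = (fun ω => (Y ω, B p ω)) ⁻¹' {x : ℝ × ℝ | x.1 = x.2} := by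
    ext ω; exact ⟨Eq.symm, Eq.symm⟩
  rw [hset, ← Measure.map_apply (hYm.prodMk (hB.measurable p)) hs,
    (indepFun_iff_map_prod_eq_prod_map_map hYm.aemeasurable
      (hB.measurable p).aemeasurable).mp hIndep, hmap, Measure.prod_apply hs]
  have hfib : ∀ a : ℝ, (Prod.mk a ⁻¹' {x : ℝ × ℝ | x.1 = x.2}) = {a} := by
    intro a; ext b; simp [eq_comm]
  have hz' : ∀ a : ℝ, gaussianReal 0 (Real.toNNReal p) {a} = 0 := fun a =>
    gaussianReal_absolutelyContinuous 0 hv Real.volume_singleton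
  simp [hfib, hz']

/-! ### The bad sets -/

/-- The value that `B p` must take if the path has a zero local max on `[p,q]`. -/
noncomputable def Ymax (B : ℝ → Ω → ℝ) (f : ℝ → ℝ) (p q : ℝ) (ω : Ω) : ℝ :=
  -⨆ n : ℕ, (B (pt p q n) ω - B p ω - f (pt p q n))

/-- The value that `B p` must take if the path has a zero local min on `[p,q]`. -/
noncomputable def Ymin (B : ℝ → Ω → ℝ) (f : ℝ → ℝ) (p q : ℝ) (ω : Ω) : ℝ :=
  ⨆ n : ℕ, (f (pt p q n) - (B (pt p q n) ω - B p ω))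

open Classical in
/-- The bad event associated to a rational pair `P < Q`. -/
noncomputable def badSet (B : ℝ → Ω → ℝ) (f : ℝ → ℝ) (P Q : ℚ) : Set Ω :=
  if 0 < (P:ℝ) ∧ (P:ℝ) < (Q:ℝ) then
    {ω | B P ω = Ymax B f P Q ω} ∪ {ω | B P ω = Ymin B f P Q ω}
  else ∅

lemma bound_aux (hB : IsBrownianMotion μ B) {f : ℝ → ℝ} (hf : ContinuousOn f (Set.Ici 0))
    {p q : ℝ} (hp : 0 < p) (hpq : p < q) (ω : Ω) :
    ∃ C : ℝ, ∀ n : ℕ, |B (pt p q n) ω| + |B p ω| + |f (pt p q n)| ≤ C := by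
  have hIcc : Set.Icc p q ⊆ Set.Ici (0:ℝ) := fun x hx => le_trans hp.le hx.1
  obtain ⟨C₁, hC₁⟩ := (isCompact_Icc (a := p) (b := q)).exists_bound_of_continuousOn
    (hB.cont_paths ω).continuousOn
  obtain ⟨C₂, hC₂⟩ := (isCompact_Icc (a := p) (b := q)).exists_bound_of_continuousOn
    (hf.mono hIcc)
  refine ⟨C₁ + C₁ + C₂, fun n => ?_⟩
  have h1 := hC₁ _ (pt_mem hpq.le n)
  have h2 := hC₁ p ⟨le_rfl, hpq.le⟩
  have h3 := hC₂ _ (pt_mem hpq.le n)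
  rw [Real.norm_eq_abs] at h1 h2 h3
  linarith

lemma bddAbove_max (hB : IsBrownianMotion μ B) {f : ℝ → ℝ} (hf : ContinuousOn f (Set.Ici 0))
    {p q : ℝ} (hp : 0 < p) (hpq : p < q) (ω : Ω) :
    BddAbove (Set.range fun n : ℕ => B (pt p q n) ω - B p ω - f (pt p q n)) := by
  obtain ⟨C, hC⟩ := bound_aux hB hf hp hpq ω
  refine ⟨C, ?_⟩
  rintro x ⟨n, rfl⟩
  have := hC n
  have h1 := le_abs_self (B (pt p q n) ω)
  have h2 := neg_abs_le (B p ω)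
  have h3 := neg_abs_le (f (pt p q n))
  show B (pt p q n) ω - B p ω - f (pt p q n) ≤ C
  linarith

lemma bddAbove_min (hB : IsBrownianMotion μ B) {f : ℝ → ℝ} (hf : ContinuousOn f (Set.Ici 0))
    {p q : ℝ} (hp : 0 < p) (hpq : p < q) (ω : Ω) :
    BddAbove (Set.range fun n : ℕ => f (pt p q n) - (B (pt p q n) ω - B p ω)) := by
  obtain ⟨C, hC⟩ := bound_aux hB hf hp hpq ω
  refine ⟨C, ?_⟩
  rintro x ⟨n, rfl⟩
  have := hC n
  have h1 := le_abs_self (f (pt p q n))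
  have h2 := neg_abs_le (B (pt p q n) ω)
  have h3 := le_abs_self (B p ω)
  show f (pt p q n) - (B (pt p q n) ω - B p ω) ≤ C
  linarith

lemma measurable_term {p q : ℝ} (n : ℕ) :
    Measurable[incSigma B p q] (fun ω => B (pt p q n) ω - B p ω) :=
  (comap_measurable (fun ω => B (pt p q n) ω - B p ω)).mono
    (le_iSup (fun n : ℕ => MeasurableSpace.comap
      (fun ω => B (pt p q n) ω - B p ω) inferInstance) n) le_rfl

lemma badSet_null (hB : IsBrownianMotion μ B) {f : ℝ → ℝ} (hf : ContinuousOn f (Set.Ici 0))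
    (P Q : ℚ) : μ (badSet B f P Q) = 0 := by
  rw [badSet]
  split_ifs with h
  · obtain ⟨hp, hpq⟩ := h
    have hYmax : Measurable[incSigma B (P:ℝ) (Q:ℝ)] (Ymax B f P Q) := by
      refine Measurable.neg ?_
      exact measurable_ciSup_nat
        (fun n => (measurable_term n).sub measurable_const)
        (fun ω => bddAbove_max hB hf hp hpq ω)
    have hYmin : Measurable[incSigma B (P:ℝ) (Q:ℝ)] (Ymin B f P Q) := by
      exact measurable_ciSup_nat
        (fun n => Measurable.sub measurable_const (measurable_term n))
        (fun ω => bddAbove_min hB hf hp hpq ω)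
    exact measure_union_null (key hB hp hpq hYmax) (key hB hp hpq hYmin)
  · simp

/-! ### Deterministic part -/

/-- If `X` vanishes at a point `t` of `[p,q]` where it is continuous, and `X ≤ 0` on `[p,q]`,
then the sup of the shifted values `X (pt n) - c` equals `-c`. -/
lemma ciSup_shift {p q : ℝ} (hpq : p < q) {t : ℝ} (ht : t ∈ Set.Icc p q) {X : ℝ → ℝ}
    (hXc : ContinuousAt X t) (hX0 : X t = 0) (hle : ∀ s ∈ Set.Icc p q, X s ≤ 0) (c : ℝ) :
    (⨆ n : ℕ, (X (pt p q n) - c)) = -c := by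
  have hbdd : BddAbove (Set.range fun n : ℕ => X (pt p q n) - c) := by
    refine ⟨-c, ?_⟩
    rintro x ⟨n, rfl⟩
    have := hle _ (pt_mem hpq.le n)
    show X (pt p q n) - c ≤ -c
    linarith
  apply le_antisymm
  · refine ciSup_le fun n => ?_
    have := hle _ (pt_mem hpq.le n)
    linarith
  · refine le_of_forall_pos_le_add fun δ hδ => ?_
    obtain ⟨δ', hδ', h'⟩ := Metric.continuousAt_iff.mp hXc δ hδ
    obtain ⟨n, hn⟩ := pt_dense hpq ht hδ'
    have hd := h' (show dist (pt p q n) t < δ' by rwa [Real.dist_eq])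
    rw [Real.dist_eq, hX0, sub_zero] at hd
    have h2 : X (pt p q n) - c ≤ ⨆ n : ℕ, (X (pt p q n) - c) := le_ciSup hbdd n
    have h3 := (abs_lt.mp hd).1
    linarith

lemma mem_bad {B : ℝ → Ω → ℝ} {f : ℝ → ℝ} {ω : Ω}
    (hBcont : Continuous fun s => B s ω) (hf : ContinuousOn f (Set.Ici 0))
    {t : ℝ} (ht : 0 < t) (hXt : B t ω - f t = 0)
    (hext : IsLocalMax (fun s => B s ω - f s) t ∨ IsLocalMin (fun s => B s ω - f s) t) :
    ∃ P Q : ℚ, ω ∈ badSet B f P Q := by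
  set X : ℝ → ℝ := fun s => B s ω - f s with hX_def
  have hXt' : X t = 0 := hXt
  have hXc : ContinuousAt X t :=
    (hBcont.continuousAt).sub (hf.continuousAt (Ici_mem_nhds ht))
  rcases hext with hmax | hmin
  · obtain ⟨ε, hε, hball⟩ := Metric.eventually_nhds_iff.mp hmax
    obtain ⟨P, hP1, hP2⟩ := exists_rat_btwn (show max 0 (t - ε) < t from max_lt ht (by linarith))
    obtain ⟨Q, hQ1, hQ2⟩ := exists_rat_btwn (show t < t + ε by linarith)
    have hp : 0 < (P:ℝ) := (le_max_left 0 (t - ε)).trans_lt hP1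
    have hpq : (P:ℝ) < (Q:ℝ) := hP2.trans hQ1
    have htP : t - ε < (P:ℝ) := (le_max_right 0 (t - ε)).trans_lt hP1
    have hIcc_ball : ∀ s ∈ Set.Icc (P:ℝ) (Q:ℝ), dist s t < ε := by
      intro s hs
      rw [Real.dist_eq, abs_sub_lt_iff]
      exact ⟨by linarith [hs.2], by linarith [hs.1]⟩
    have ht_mem : t ∈ Set.Icc (P:ℝ) (Q:ℝ) := ⟨hP2.le, hQ1.le⟩
    refine ⟨P, Q, ?_⟩
    rw [badSet, if_pos ⟨hp, hpq⟩]
    left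
    have hle : ∀ s ∈ Set.Icc (P:ℝ) (Q:ℝ), X s ≤ 0 := by
      intro s hs
      have := hball (hIcc_ball s hs)
      rw [hXt'] at this
      exact this
    show B (P:ℝ) ω = Ymax B f (P:ℝ) (Q:ℝ) ω
    have hfun : (fun n : ℕ => B (pt (P:ℝ) (Q:ℝ) n) ω - B (P:ℝ) ω - f (pt (P:ℝ) (Q:ℝ) n))
        = fun n : ℕ => X (pt (P:ℝ) (Q:ℝ) n) - B (P:ℝ) ω := by
      funext n
      simp only [hX_def]
      ring
    have hsup := ciSup_shift hpq ht_mem hXc hXt' hle (B (P:ℝ) ω)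
    rw [Ymax, hfun, hsup, neg_neg]
  · obtain ⟨ε, hε, hball⟩ := Metric.eventually_nhds_iff.mp hmin
    obtain ⟨P, hP1, hP2⟩ := exists_rat_btwn (show max 0 (t - ε) < t from max_lt ht (by linarith))
    obtain ⟨Q, hQ1, hQ2⟩ := exists_rat_btwn (show t < t + ε by linarith)
    have hp : 0 < (P:ℝ) := (le_max_left 0 (t - ε)).trans_lt hP1
    have hpq : (P:ℝ) < (Q:ℝ) := hP2.trans hQ1
    have htP : t - ε < (P:ℝ) := (le_max_right 0 (t - ε)).trans_lt hP1
    have hIcc_ball : ∀ s ∈ Set.Icc (P:ℝ) (Q:ℝ), dist s t < ε := by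
      intro s hs
      rw [Real.dist_eq, abs_sub_lt_iff]
      exact ⟨by linarith [hs.2], by linarith [hs.1]⟩
    have ht_mem : t ∈ Set.Icc (P:ℝ) (Q:ℝ) := ⟨hP2.le, hQ1.le⟩
    refine ⟨P, Q, ?_⟩
    rw [badSet, if_pos ⟨hp, hpq⟩]
    right
    set X' : ℝ → ℝ := fun s => f s - B s ω with hX'_def
    have hX't : X' t = 0 := by
      simp only [hX'_def]
      simp only [hX_def] at hXt'
      linarith
    have hX'c : ContinuousAt X' t :=
      (hf.continuousAt (Ici_mem_nhds ht)).sub hBcont.continuousAt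
    have hle : ∀ s ∈ Set.Icc (P:ℝ) (Q:ℝ), X' s ≤ 0 := by
      intro s hs
      have := hball (hIcc_ball s hs)
      rw [hXt'] at this
      simp only [hX'_def]
      simp only [hX_def] at this
      linarith
    show B (P:ℝ) ω = Ymin B f (P:ℝ) (Q:ℝ) ω
    have hfun : (fun n : ℕ => f (pt (P:ℝ) (Q:ℝ) n) - (B (pt (P:ℝ) (Q:ℝ) n) ω - B (P:ℝ) ω))
        = fun n : ℕ => X' (pt (P:ℝ) (Q:ℝ) n) - (-(B (P:ℝ) ω)) := by
      funext n
      simp only [hX'_def]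
      ring
    have hsup := ciSup_shift hpq ht_mem hX'c hX't hle (-(B (P:ℝ) ω))
    rw [Ymin, hfun, hsup, neg_neg]

end NoZeroExtremumAux

/-- Almost surely, no zero of `X = B - f` in `(0,∞)` is a local maximum or a local minimum
of `X`. -/
theorem no_zero_is_local_extremum {Ω : Type*} [MeasurableSpace Ω] (μ : Measure Ω) (B : ℝ → Ω → ℝ)
    (hB : IsBrownianMotion μ B)
    (f : ℝ → ℝ) (hf : ContinuousOn f (Set.Ici 0)) :
    ∀ᵐ ω ∂μ, ¬ ∃ t : ℝ, 0 < t ∧ B t ω - f t = 0 ∧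
      (IsLocalMax (fun s => B s ω - f s) t ∨ IsLocalMin (fun s => B s ω - f s) t) := by
  classical
  haveI := hB.isProbabilityMeasure
  rw [ae_iff]
  simp only [not_not]
  have hnull : μ (⋃ P : ℚ, ⋃ Q : ℚ, NoZeroExtremumAux.badSet B f P Q) = 0 :=
    measure_iUnion_null fun P => measure_iUnion_null fun Q =>
      NoZeroExtremumAux.badSet_null hB hf P Q
  refine measure_mono_null ?_ hnull
  intro ω hω
  obtain ⟨t, ht, hXt, hext⟩ := hω
  obtain ⟨P, Q, hPQ⟩ := NoZeroExtremumAux.mem_bad (hB.cont_paths ω) hf ht hXt hext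
  exact mem_iUnion.mpr ⟨P, mem_iUnion.mpr ⟨Q, hPQ⟩⟩
end

section
/- Let f : [0,∞) → ℝ be bounded on every compact interval and let 0 < α < 1. Then the sets B_f^+ = {t ≥ 0 : liminf_{h↓0} (f(t+h)−f(t))/h^α > 0} and B_f^− = {t ≥ 0 : limsup_{h↓0} (f(t+h)−f(t))/h^α < 0} each have Hausdorff dimension at most α. -/
open MeasureTheory ProbabilityTheory Filter Set Topology
open scoped ENNReal

open scoped NNReal in
private lemma dimH_le_of_rev_holder (f : ℝ → ℝ) {α c : ℝ} (hα0 : 0 < α) (hc : 0 < c)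
    (S : Set ℝ) (hS : ∀ t ∈ S, ∀ s ∈ S, t < s → c * (s - t) ^ α ≤ f s - f t) :
    dimH S ≤ ENNReal.ofReal α := by
  -- key estimate
  have key : ∀ t ∈ S, ∀ s ∈ S, t < s →
      s - t ≤ c⁻¹ ^ α⁻¹ * |f s - f t| ^ α⁻¹ := by
    intro t ht s hs hts
    have hst : (0:ℝ) < s - t := sub_pos.2 hts
    have h0 : (0:ℝ) < c * (s - t) ^ α := mul_pos hc (Real.rpow_pos_of_pos hst α)
    have hd : (0:ℝ) < f s - f t := lt_of_lt_of_le h0 (hS t ht s hs hts)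
    have h1 : (s - t) ^ α ≤ c⁻¹ * (f s - f t) := by
      rw [inv_mul_eq_div, le_div_iff₀ hc, mul_comm]
      exact hS t ht s hs hts
    have h2 : ((s - t) ^ α) ^ α⁻¹ ≤ (c⁻¹ * (f s - f t)) ^ α⁻¹ :=
      Real.rpow_le_rpow (Real.rpow_nonneg hst.le α) h1 (inv_nonneg.2 hα0.le)
    rw [Real.rpow_rpow_inv hst.le hα0.ne'] at h2
    rw [Real.mul_rpow (inv_nonneg.2 hc.le) hd.le] at h2
    rwa [abs_of_pos hd]
  have key' : ∀ t ∈ S, ∀ s ∈ S, |s - t| ≤ c⁻¹ ^ α⁻¹ * |f s - f t| ^ α⁻¹ := by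
    intro t ht s hs
    rcases lt_trichotomy t s with h | h | h
    · rw [abs_of_pos (sub_pos.2 h)]; exact key t ht s hs h
    · subst h; simp [Real.zero_rpow (inv_ne_zero hα0.ne')]

    · rw [abs_sub_comm, abs_sub_comm (f s), abs_of_pos (sub_pos.2 h)]
      exact key s hs t ht h
  have inj : InjOn f S := by
    intro t ht s hs hfe
    have := key' t ht s hs
    rw [hfe, sub_self, abs_zero, Real.zero_rpow (inv_ne_zero hα0.ne'), mul_zero] at this
    have := abs_nonpos_iff.1 (le_trans this le_rfl)
    linarith [sub_eq_zero.1 this]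
  set g : ℝ → ℝ := Function.invFunOn f S with hg
  have hleft : Set.LeftInvOn g f S := inj.leftInvOn_invFunOn
  have himg : g '' (f '' S) = S := hleft.image_image
  set r : ℝ≥0 := Real.toNNReal α⁻¹ with hr
  have hrpos : 0 < r := Real.toNNReal_pos.2 (inv_pos.2 hα0)
  have hrR : (r : ℝ) = α⁻¹ := Real.coe_toNNReal _ (inv_nonneg.2 hα0.le)
  set C : ℝ≥0 := Real.toNNReal (c⁻¹ ^ α⁻¹) with hC
  have holder : HolderOnWith C r g (f '' S) := by
    intro x hx y hy
    obtain ⟨t, ht, rfl⟩ := hx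
    obtain ⟨s, hs, rfl⟩ := hy
    rw [hleft ht, hleft hs]
    have hdist : dist t s ≤ c⁻¹ ^ α⁻¹ * dist (f t) (f s) ^ α⁻¹ := by
      rw [Real.dist_eq, Real.dist_eq, abs_sub_comm t s, abs_sub_comm (f t)]
      exact key' t ht s hs
    calc edist t s = ENNReal.ofReal (dist t s) := edist_dist t s
      _ ≤ ENNReal.ofReal (c⁻¹ ^ α⁻¹ * dist (f t) (f s) ^ α⁻¹) := ENNReal.ofReal_le_ofReal hdist
      _ = ENNReal.ofReal (c⁻¹ ^ α⁻¹) * ENNReal.ofReal (dist (f t) (f s) ^ α⁻¹) :=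
          ENNReal.ofReal_mul (by positivity)
      _ = (C : ℝ≥0∞) * edist (f t) (f s) ^ (r : ℝ) := by
          rw [hrR, ← ENNReal.ofReal_rpow_of_nonneg dist_nonneg (inv_nonneg.2 hα0.le),
            edist_dist]
          rfl
  calc dimH S = dimH (g '' (f '' S)) := by rw [himg]
    _ ≤ dimH (f '' S) / r := holder.dimH_image_le hrpos
    _ ≤ dimH (univ : Set ℝ) / r :=
        ENNReal.div_le_div_right (dimH_mono (subset_univ _)) _
    _ = 1 / r := by rw [Real.dimH_univ]
    _ = ENNReal.ofReal α := by
        rw [one_div, ← ENNReal.coe_inv hrpos.ne', hr, Real.toNNReal_inv, inv_inv]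
        rfl

open scoped NNReal in
private lemma aux_dimH (f : ℝ → ℝ) {α : ℝ} (hα0 : 0 < α) (A : Set ℝ)
    (hA : ∀ t ∈ A, 0 ≤ t ∧ ∃ c > (0:ℝ), ∃ δ > (0:ℝ),
      ∀ h : ℝ, 0 < h → h < δ → c * h ^ α ≤ f (t + h) - f t) :
    dimH A ≤ ENNReal.ofReal α := by
  set E : ℕ → ℕ → Set ℝ := fun n k =>
    {t : ℝ | (∀ h : ℝ, 0 < h → h < ((n:ℝ)+1)⁻¹ → ((n:ℝ)+1)⁻¹ * h ^ α ≤ f (t+h) - f t)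
      ∧ t ∈ Icc ((k:ℝ) * (((n:ℝ)+1)⁻¹/2)) (((k:ℝ)+1) * (((n:ℝ)+1)⁻¹/2))} with hE
  have hsub : A ⊆ ⋃ (n : ℕ) (k : ℕ), E n k := by
    intro t ht
    obtain ⟨ht0, c, hc, δ, hδ, hcd⟩ := hA t ht
    have hm : (0:ℝ) < min c δ := lt_min hc hδ
    obtain ⟨n, hn⟩ := exists_nat_gt (min c δ)⁻¹
    have hn1 : ((n:ℝ)+1)⁻¹ < min c δ := by
      rw [← inv_inv (min c δ)]
      exact inv_strictAnti₀ (inv_pos.2 hm) (hn.trans (lt_add_one _))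
    set d : ℝ := ((n:ℝ)+1)⁻¹/2 with hd
    have hdpos : (0:ℝ) < d := by positivity
    refine mem_iUnion.2 ⟨n, mem_iUnion.2 ⟨⌊t / d⌋₊, ?_, ?_⟩⟩
    · intro h h0 hh
      have h1 : h < δ := hh.trans (hn1.trans_le (min_le_right _ _))
      have h2 : ((n:ℝ)+1)⁻¹ ≤ c := (hn1.trans_le (min_le_left _ _)).le
      calc ((n:ℝ)+1)⁻¹ * h ^ α ≤ c * h ^ α := by
            apply mul_le_mul_of_nonneg_right h2 (Real.rpow_nonneg h0.le α)
        _ ≤ f (t + h) - f t := hcd h h0 h1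
    · constructor
      · rw [← le_div_iff₀ hdpos] at *
        exact Nat.floor_le (by positivity)
      · have := Nat.lt_floor_add_one (t / d)
        rw [div_lt_iff₀ hdpos] at this
        exact this.le
  refine (dimH_mono hsub).trans ?_
  rw [dimH_iUnion]
  refine iSup_le fun n => ?_
  rw [dimH_iUnion]
  refine iSup_le fun k => ?_
  apply dimH_le_of_rev_holder f hα0 (c := ((n:ℝ)+1)⁻¹) (by positivity)
  intro t htk s hsk hts
  obtain ⟨hprop, htI⟩ := htk
  obtain ⟨_, hsI⟩ := hsk
  have hh0 : (0:ℝ) < s - t := sub_pos.2 hts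
  have hhlt : s - t < ((n:ℝ)+1)⁻¹ := by
    have h1 : s - t ≤ ((n:ℝ)+1)⁻¹/2 := by
      have := hsI.2; have := htI.1
      nlinarith
    have : ((n:ℝ)+1)⁻¹/2 < ((n:ℝ)+1)⁻¹ := by
      have : (0:ℝ) < ((n:ℝ)+1)⁻¹ := by positivity
      linarith
    linarith
  have := hprop (s - t) hh0 hhlt
  rwa [add_sub_cancel] at this

/-- For `f : [0,∞) → ℝ` bounded on compact intervals and `0 < α < 1`, the sets of points at
which `liminf_{h↓0} (f (t+h) - f t)/h^α > 0`, resp. `limsup_{h↓0} (f (t+h) - f t)/h^α < 0`,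
each have Hausdorff dimension at most `α`. -/
theorem dimH_one_sided_growth_sets_le (f : ℝ → ℝ)
    (hf : ∀ a b : ℝ, 0 ≤ a → ∃ M : ℝ, ∀ t ∈ Set.Icc a b, |f t| ≤ M)
    (α : ℝ) (hα0 : 0 < α) (hα1 : α < 1) :
    dimH {t : ℝ | 0 ≤ t ∧ 0 < Filter.liminf
        (fun h : ℝ => (((f (t + h) - f t) / h ^ α : ℝ) : EReal))
        (nhdsWithin 0 (Set.Ioi 0))} ≤ ENNReal.ofReal α ∧
    dimH {t : ℝ | 0 ≤ t ∧ Filter.limsup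
        (fun h : ℝ => (((f (t + h) - f t) / h ^ α : ℝ) : EReal))
        (nhdsWithin 0 (Set.Ioi 0)) < 0} ≤ ENNReal.ofReal α := by
  constructor
  · apply aux_dimH f hα0
    rintro t ⟨ht0, hlim⟩
    refine ⟨ht0, ?_⟩
    obtain ⟨c, hc0, hclim⟩ := EReal.lt_iff_exists_real_btwn.1 hlim
    have hc0' : (0:ℝ) < c := by exact_mod_cast hc0
    have hev : ∀ᶠ h in nhdsWithin (0:ℝ) (Set.Ioi 0),
        (c : EReal) < (((f (t + h) - f t) / h ^ α : ℝ) : EReal) :=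
      eventually_lt_of_lt_liminf hclim
    rw [eventually_iff] at hev
    obtain ⟨u, hu, hsub⟩ := mem_nhdsGT_iff_exists_Ioo_subset.1 hev
    refine ⟨c, hc0', u, hu, fun h h0 hh => ?_⟩
    have hmem := hsub ⟨h0, hh⟩
    have : c < (f (t + h) - f t) / h ^ α := by exact_mod_cast hmem
    have hpow : (0:ℝ) < h ^ α := Real.rpow_pos_of_pos h0 α
    rw [lt_div_iff₀ hpow] at this
    exact this.le
  · apply aux_dimH (fun x => -f x) hα0
    rintro t ⟨ht0, hlim⟩
    refine ⟨ht0, ?_⟩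
    obtain ⟨x, hxlim, hx0⟩ := EReal.lt_iff_exists_real_btwn.1 hlim
    have hx0' : x < (0:ℝ) := by exact_mod_cast hx0
    have hev : ∀ᶠ h in nhdsWithin (0:ℝ) (Set.Ioi 0),
        (((f (t + h) - f t) / h ^ α : ℝ) : EReal) < (x : EReal) :=
      eventually_lt_of_limsup_lt hxlim
    rw [eventually_iff] at hev
    obtain ⟨u, hu, hsub⟩ := mem_nhdsGT_iff_exists_Ioo_subset.1 hev
    refine ⟨-x, by linarith, u, hu, fun h h0 hh => ?_⟩
    have hmem := hsub ⟨h0, hh⟩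
    have hlt : (f (t + h) - f t) / h ^ α < x := by exact_mod_cast hmem
    have hpow : (0:ℝ) < h ^ α := Real.rpow_pos_of_pos h0 α
    rw [div_lt_iff₀ hpow] at hlt
    have : -f (t + h) - -f t = -(f (t + h) - f t) := by ring
    rw [this]
    nlinarith
end

section
/- Let f : [0,∞) → ℝ have bounded variation on every compact interval and let 0 < α < 1. Then the set B_f = {t ≥ 0 : limsup_{h↓0} |f(t+h)−f(t)|/h^α > 0} has Hausdorff dimension at most α. -/
open MeasureTheory ProbabilityTheory Filter Set Topology
open scoped ENNReal

set_option maxHeartbeats 1000000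
open Metric

/-- Increments of a monotone function over pairwise disjoint intervals inside `[lo, hi]`
sum to at most the total increment. -/
lemma tsum_incr_le {ι : Type*} [Countable ι] {W : ℝ → ℝ} (hW : Monotone W)
    (a b : ι → ℝ) {lo hi : ℝ}
    (hlo : ∀ i, lo ≤ a i) (hhi : ∀ i, b i ≤ hi)
    (hd : Pairwise (Function.onFun Disjoint (fun i => Set.Icc (a i) (b i))))
    (hab : ∀ i, a i ≤ b i) :
    ∑' i, ENNReal.ofReal (W (b i) - W (a i)) ≤ ENNReal.ofReal (W hi - W lo) := by
  have key : ∀ i j, i ≠ j → b i ≤ a j ∨ b j ≤ a i := by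
    intro i j hij
    by_contra hcon
    push_neg at hcon
    obtain ⟨h1, h2⟩ := hcon
    have hmem1 : max (a i) (a j) ∈ Set.Icc (a i) (b i) :=
      ⟨le_max_left _ _, max_le (hab i) h1.le⟩
    have hmem2 : max (a i) (a j) ∈ Set.Icc (a j) (b j) :=
      ⟨le_max_right _ _, max_le h2.le (hab j)⟩
    exact (Set.disjoint_left.1 (hd hij)) hmem1 hmem2
  have hdW : Pairwise (Function.onFun Disjoint (fun i => Set.Ioo (W (a i)) (W (b i)))) := by
    intro i j hij
    rcases key i j hij with h | h
    · refine Set.disjoint_left.2 fun z hz hz' => ?_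
      exact absurd (hz.2.trans_le ((hW h).trans hz'.1.le)) (lt_irrefl z)
    · refine Set.disjoint_left.2 fun z hz hz' => ?_
      exact absurd (hz'.2.trans_le ((hW h).trans hz.1.le)) (lt_irrefl z)
  calc ∑' i, ENNReal.ofReal (W (b i) - W (a i))
      = ∑' i, volume (Set.Ioo (W (a i)) (W (b i))) := by simp [Real.volume_Ioo]
    _ = volume (⋃ i, Set.Ioo (W (a i)) (W (b i))) :=
        (measure_iUnion hdW fun i => measurableSet_Ioo).symm
    _ ≤ volume (Set.Icc (W lo) (W hi)) := by
        refine measure_mono (Set.iUnion_subset fun i z hz => ?_)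
        exact ⟨(hW (hlo i)).trans hz.1.le, hz.2.le.trans (hW (hhi i))⟩
    _ = ENNReal.ofReal (W hi - W lo) := Real.volume_Icc


/-- Key covering lemma. -/
lemma key_zero {W : ℝ → ℝ} (hW : Monotone W) {E : Set ℝ} {n : ℝ}
    (hE : E ⊆ Set.Icc 0 n) {c α β : ℝ} (hc : 0 < c) (hα : 0 < α) (hβ : α < β)
    (hosc : ∀ t ∈ E, ∀ δ : ℝ, 0 < δ → δ ≤ 1 →
      ∃ h : ℝ, 0 < h ∧ h < δ ∧ c * h ^ α ≤ W (t + h) - W t) :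
    μH[β] E = 0 := by
  rcases E.eq_empty_or_nonempty with rfl | ⟨t₀, ht₀⟩
  · simp
  have hn0 : (0:ℝ) ≤ n := le_trans (hE ht₀).1 (hE ht₀).2
  have main : ∀ k : ℕ, ∃ (u : Set ℝ) (h : ℝ → ℝ),
      u ⊆ E ∧ u.Countable ∧
      (∀ i ∈ u, 0 < h i ∧ h i < ((k:ℝ)+1)⁻¹ ∧ c * h i ^ α ≤ W (i + h i) - W i) ∧
      (u.PairwiseDisjoint fun i => Set.Icc i (i + h i)) ∧
      (E ⊆ ⋃ i ∈ u, closedBall (i + h i / 2) (5 * (h i / 2))) := by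
    intro k
    have hδ0 : (0:ℝ) < ((k:ℝ)+1)⁻¹ := by positivity
    have hδ1 : ((k:ℝ)+1)⁻¹ ≤ 1 := by
      rw [inv_le_one_iff₀]; right; linarith [Nat.cast_nonneg (α := ℝ) k]
    have hch : ∀ i : ℝ, ∃ hh : ℝ, i ∈ E →
        (0 < hh ∧ hh < ((k:ℝ)+1)⁻¹ ∧ c * hh ^ α ≤ W (i + hh) - W i) := by
      intro i
      by_cases hi : i ∈ E
      · obtain ⟨hh, h1, h2, h3⟩ := hosc i hi _ hδ0 hδ1
        exact ⟨hh, fun _ => ⟨h1, h2, h3⟩⟩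
      · exact ⟨1, fun h => absurd h hi⟩
    choose h hh using hch
    obtain ⟨u, huE, hud, hcov⟩ :=
      Vitali.exists_disjoint_subfamily_covering_enlargement_closedBall E
        (fun i => i + h i / 2) (fun i => h i / 2) 1
        (fun i hi => by linarith [(hh i hi).1, (hh i hi).2.1, hδ1]) 5 (by norm_num)
    have hIcc : ∀ i : ℝ, closedBall (i + h i / 2) (h i / 2) = Set.Icc i (i + h i) := by
      intro i
      rw [Real.closedBall_eq_Icc]
      congr 1 <;> ring
    refine ⟨u, h, huE, ?_, fun i hi => hh i (huE hi), ?_, ?_⟩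
    · refine hud.countable_of_nonempty_interior (fun i hi => ?_)
      rw [hIcc i, interior_Icc]
      have := (hh i (huE hi)).1
      exact ⟨i + h i / 2, by constructor <;> linarith⟩
    · intro i hi j hj hij
      have := hud hi hj hij
      simpa [Function.onFun, hIcc i, hIcc j] using this
    · intro x hx
      obtain ⟨b, hbu, hsub⟩ := hcov x hx
      have hxmem : x ∈ closedBall (x + h x / 2) (h x / 2) := by
        rw [mem_closedBall, Real.dist_eq]
        have := (hh x hx).1
        rw [abs_le]; constructor <;> linarith
      exact Set.mem_biUnion hbu (hsub hxmem)
  choose u h huE hucnt huh hud hucov using main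
  have hβ0 : (0:ℝ) < β := hα.trans hβ
  have hcnt : ∀ k, Countable (u k) := fun k => (hucnt k).to_subtype
  have hcover_bound : μH[β] E ≤
      liminf (fun k => ∑' i : u k, EMetric.diam
        (closedBall ((i:ℝ) + h k i / 2) (5 * (h k i / 2))) ^ β) atTop := by
    refine MeasureTheory.Measure.hausdorffMeasure_le_liminf_tsum (ι := fun k => u k) β E
      (fun k => ENNReal.ofReal (5 * ((k:ℝ)+1)⁻¹)) ?_ _ ?_ ?_
    · have h0 : Tendsto (fun k : ℕ => 5 * ((k:ℝ)+1)⁻¹) atTop (𝓝 0) := by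
        have := tendsto_one_div_add_atTop_nhds_zero_nat (𝕜 := ℝ)
        simpa [one_div] using this.const_mul (5:ℝ)
      have := (ENNReal.continuous_ofReal.tendsto 0).comp h0
      simpa [Function.comp_def] using this
    · refine Eventually.of_forall fun k => fun i => ?_
      have h1 := (huh k i i.2).1
      have h2 := (huh k i i.2).2.1
      rw [Real.closedBall_eq_Icc, Real.ediam_Icc]
      apply ENNReal.ofReal_le_ofReal
      linarith
    · refine Eventually.of_forall fun k => fun x hx => ?_
      obtain ⟨i, hiu, hmem⟩ := Set.mem_iUnion₂.mp (hucov k hx)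
      exact Set.mem_iUnion.2 ⟨⟨i, hiu⟩, hmem⟩
  set T : ℝ := W (n + 1) - W 0 with hT
  have hT0 : 0 ≤ T := sub_nonneg.2 (hW (by linarith))
  have hsum_bound : ∀ k : ℕ,
      (∑' i : u k, EMetric.diam
        (closedBall ((i:ℝ) + h k i / 2) (5 * (h k i / 2))) ^ β)
      ≤ ENNReal.ofReal ((5:ℝ) ^ β * ((k:ℝ)+1)⁻¹ ^ (β - α) * c⁻¹) * ENNReal.ofReal T := by
    intro k
    have hδ0 : (0:ℝ) < ((k:ℝ)+1)⁻¹ := by positivity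
    set K : ℝ := (5:ℝ) ^ β * ((k:ℝ)+1)⁻¹ ^ (β - α) * c⁻¹ with hK
    have hK0 : 0 ≤ K := by positivity
    calc ∑' i : u k, EMetric.diam
          (closedBall ((i:ℝ) + h k i / 2) (5 * (h k i / 2))) ^ β
        ≤ ∑' i : u k, ENNReal.ofReal K * ENNReal.ofReal (W ((i:ℝ) + h k i) - W i) := by
          refine ENNReal.tsum_le_tsum fun i => ?_
          obtain ⟨h1, h2, h3⟩ := huh k i i.2
          rw [Real.closedBall_eq_Icc, EMetric.diam, Real.ediam_Icc]
          have heq : (i:ℝ) + h k i / 2 + 5 * (h k i / 2) - ((i:ℝ) + h k i / 2 - 5 * (h k i / 2))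
              = 5 * h k i := by ring
          rw [heq, ENNReal.ofReal_rpow_of_nonneg (by linarith) hβ0.le,
            ← ENNReal.ofReal_mul hK0]
          apply ENNReal.ofReal_le_ofReal
          have hstep : (5 * h k i) ^ β ≤ K * (c * h k i ^ α) := by
            have e1 : (5 * h k i) ^ β = 5 ^ β * h k i ^ β :=
              Real.mul_rpow (by norm_num) h1.le
            have e2 : h k i ^ β = h k i ^ (β - α) * h k i ^ α := by
              rw [← Real.rpow_add h1]; ring_nf
            have e3 : h k i ^ (β - α) ≤ ((k:ℝ)+1)⁻¹ ^ (β - α) :=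
              Real.rpow_le_rpow h1.le h2.le (by linarith)
            have hhα : (0:ℝ) < h k i ^ α := Real.rpow_pos_of_pos h1 α
            rw [e1, e2, hK]
            have hmono : 5 ^ β * (h k i ^ (β-α) * h k i ^ α) ≤
                5 ^ β * (((k:ℝ)+1)⁻¹ ^ (β - α) * h k i ^ α) := by
              have h5 : (0:ℝ) ≤ (5:ℝ) ^ β := by positivity
              nlinarith [mul_le_mul_of_nonneg_right e3 hhα.le]
            refine hmono.trans (le_of_eq ?_)
            have hcc : c⁻¹ * c = 1 := inv_mul_cancel₀ hc.ne'
            linear_combination (-((5:ℝ) ^ β * ((k:ℝ)+1)⁻¹ ^ (β - α) * h k i.1 ^ α)) * hcc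
          refine hstep.trans ?_
          gcongr
      _ = ENNReal.ofReal K * ∑' i : u k, ENNReal.ofReal (W ((i:ℝ) + h k i) - W i) :=
          ENNReal.tsum_mul_left
      _ ≤ ENNReal.ofReal K * ENNReal.ofReal T := by
          gcongr
          rw [hT]
          refine tsum_incr_le hW (fun i : u k => (i:ℝ)) (fun i => (i:ℝ) + h k i)
            (fun i => (hE (huE k i.2)).1)
            (fun i => ?_) ?_ (fun i => ?_)
          · show (i:ℝ) + h k i ≤ n + 1
            have h2 := (huh k i i.2).2.1
            have hδ1 : ((k:ℝ)+1)⁻¹ ≤ 1 := by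
              rw [inv_le_one_iff₀]; right; linarith [Nat.cast_nonneg (α := ℝ) k]
            have := (hE (huE k i.2)).2
            linarith
          · intro i j hij
            exact hud k i.2 j.2 (Subtype.coe_injective.ne hij)
          · show (i:ℝ) ≤ (i:ℝ) + h k i
            linarith [(huh k i i.2).1]
  have hlim : Tendsto (fun k : ℕ =>
      ENNReal.ofReal ((5:ℝ) ^ β * ((k:ℝ)+1)⁻¹ ^ (β - α) * c⁻¹) * ENNReal.ofReal T)
      atTop (𝓝 0) := by
    have h1 : Tendsto (fun k : ℕ => ((k:ℝ)+1)⁻¹ ^ (β - α)) atTop (𝓝 0) := by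
      have h2 : Tendsto (fun k : ℕ => ((k:ℝ)+1)) atTop atTop :=
        tendsto_natCast_atTop_atTop.atTop_add tendsto_const_nhds
      have h3 : Tendsto (fun x : ℝ => x ^ (-(β - α))) atTop (𝓝 0) :=
        tendsto_rpow_neg_atTop (by linarith)
      refine (h3.comp h2).congr' (Eventually.of_forall fun k => ?_)
      simp only [Function.comp_apply]
      rw [Real.rpow_neg (by positivity), ← Real.inv_rpow (by positivity)]
    have h4 : Tendsto (fun k : ℕ => (5:ℝ) ^ β * ((k:ℝ)+1)⁻¹ ^ (β - α) * c⁻¹) atTop (𝓝 0) := by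
      have := (h1.const_mul ((5:ℝ) ^ β)).mul_const c⁻¹
      simpa using this
    have := ENNReal.Tendsto.mul_const (b := ENNReal.ofReal T)
      ((ENNReal.continuous_ofReal.tendsto 0).comp h4) (Or.inr ENNReal.ofReal_ne_top)
    simpa using this
  refine le_antisymm (hcover_bound.trans ?_) zero_le
  have hlml : liminf (fun k => ∑' i : u k, EMetric.diam
        (closedBall ((i:ℝ) + h k i / 2) (5 * (h k i / 2))) ^ β) atTop ≤
      liminf (fun k : ℕ =>
        ENNReal.ofReal ((5:ℝ) ^ β * ((k:ℝ)+1)⁻¹ ^ (β - α) * c⁻¹) * ENNReal.ofReal T) atTop :=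
    liminf_le_liminf (Eventually.of_forall hsum_bound)
  refine hlml.trans ?_
  rw [hlim.liminf_eq]

/-- For `f : [0,∞) → ℝ` of bounded variation on compact intervals and `0 < α < 1`, the set of
points at which `limsup_{h↓0} |f (t+h) - f t|/h^α > 0` has Hausdorff dimension at most `α`. -/
theorem dimH_fast_oscillation_set_le (f : ℝ → ℝ)
    (hf : ∀ a b : ℝ, 0 ≤ a → BoundedVariationOn f (Set.Icc a b))
    (α : ℝ) (hα0 : 0 < α) (hα1 : α < 1) :
    dimH {t : ℝ | 0 ≤ t ∧ 0 < Filter.limsup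
        (fun h : ℝ => ((|f (t + h) - f t| / h ^ α : ℝ) : EReal))
        (nhdsWithin 0 (Set.Ioi 0))} ≤ ENNReal.ofReal α := by
  -- a monotone majorant of the variation
  have hLBV : LocallyBoundedVariationOn f (Set.Ici 0) := by
    intro a b ha hb
    have heq : Set.Ici (0:ℝ) ∩ Set.Icc a b = Set.Icc a b :=
      Set.inter_eq_right.2 fun x hx => le_trans ha hx.1
    rw [heq]
    exact hf a b ha
  obtain ⟨p, q, hp, hq, hpq⟩ := hLBV.exists_monotoneOn_sub_monotoneOn
  set W : ℝ → ℝ := fun x => p (max x 0) + q (max x 0) with hWdef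
  have hW : Monotone W := by
    intro x y hxy
    have h1 : max x 0 ∈ Set.Ici (0:ℝ) := Set.mem_Ici.2 (le_max_right _ _)
    have h2 : max y 0 ∈ Set.Ici (0:ℝ) := Set.mem_Ici.2 (le_max_right _ _)
    have h3 : max x 0 ≤ max y 0 := max_le_max hxy le_rfl
    exact add_le_add (hp h1 h2 h3) (hq h1 h2 h3)
  have hincr : ∀ t h : ℝ, 0 ≤ t → 0 < h → |f (t + h) - f t| ≤ W (t + h) - W t := by
    intro t h ht hh
    have htm : max t 0 = t := max_eq_left ht
    have hthm : max (t + h) 0 = t + h := max_eq_left (by linarith)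
    have ht' : t ∈ Set.Ici (0:ℝ) := ht
    have hth' : t + h ∈ Set.Ici (0:ℝ) := by simp only [Set.mem_Ici]; linarith
    have hple : p t ≤ p (t + h) := hp ht' hth' (by linarith)
    have hqle : q t ≤ q (t + h) := hq ht' hth' (by linarith)
    have hfe : f (t + h) - f t = (p (t + h) - p t) - (q (t + h) - q t) := by
      rw [hpq]; simp only [Pi.sub_apply]; ring
    have hWe : W (t + h) - W t = (p (t + h) - p t) + (q (t + h) - q t) := by
      rw [hWdef]; simp only [htm, hthm]; ring
    rw [hfe, hWe, abs_le]
    constructor <;> linarith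
  -- the decomposition into countably many pieces
  set E : ℕ → ℕ → Set ℝ := fun n c => {t : ℝ | t ∈ Set.Icc (0:ℝ) n ∧
    ∀ δ : ℝ, 0 < δ → δ ≤ 1 → ∃ h : ℝ, 0 < h ∧ h < δ ∧
      ((c:ℝ)+1)⁻¹ * h ^ α ≤ W (t + h) - W t} with hEdef
  have hsub : {t : ℝ | 0 ≤ t ∧ 0 < Filter.limsup
        (fun h : ℝ => ((|f (t + h) - f t| / h ^ α : ℝ) : EReal))
        (nhdsWithin 0 (Set.Ioi 0))} ⊆ ⋃ nc : ℕ × ℕ, E nc.1 nc.2 := by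
    rintro t ⟨ht0, htL⟩
    obtain ⟨n, hn⟩ := exists_nat_ge t
    -- find c with ((c:ℝ)+1)⁻¹ < limsup
    set L := Filter.limsup
        (fun h : ℝ => ((|f (t + h) - f t| / h ^ α : ℝ) : EReal))
        (nhdsWithin 0 (Set.Ioi 0)) with hL
    have hc : ∃ c : ℕ, (((c:ℝ)+1)⁻¹ : EReal) < L := by
      obtain ⟨x, hx0, hxL⟩ := EReal.exists_between_coe_real htL
      have hx : (0:ℝ) < x := EReal.coe_pos.1 hx0
      obtain ⟨c, hcx⟩ := exists_nat_gt x⁻¹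
      refine ⟨c, lt_trans ?_ hxL⟩
      have hxc : x⁻¹ < (c:ℝ) + 1 := hcx.trans (lt_add_one _)
      have hlt : ((c:ℝ)+1)⁻¹ < x := by
        rw [inv_lt_comm₀ (by positivity) hx]
        exact hxc
      exact EReal.coe_lt_coe_iff.2 hlt
    obtain ⟨c, hcL⟩ := hc
    have hfreq : ∃ᶠ h in nhdsWithin 0 (Set.Ioi 0),
        ((((c:ℝ)+1)⁻¹ : ℝ) : EReal) < ((|f (t + h) - f t| / h ^ α : ℝ) : EReal) :=
      Filter.frequently_lt_of_lt_limsup (by isBoundedDefault) hcL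
    refine Set.mem_iUnion.2 ⟨(n, c), ⟨⟨ht0, hn⟩, ?_⟩⟩
    intro δ hδ0 hδ1
    have hmem : Set.Ioo (0:ℝ) δ ∈ nhdsWithin 0 (Set.Ioi 0) :=
      Ioo_mem_nhdsGT_of_mem ⟨le_refl 0, hδ0⟩
    obtain ⟨h, hhlt, hhmem⟩ := (hfreq.and_eventually (eventually_of_mem hmem fun x hx => hx)).exists
    refine ⟨h, hhmem.1, hhmem.2, ?_⟩
    have hlt : ((c:ℝ)+1)⁻¹ < |f (t + h) - f t| / h ^ α := by exact_mod_cast hhlt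
    have hhα : (0:ℝ) < h ^ α := Real.rpow_pos_of_pos hhmem.1 α
    have := (lt_div_iff₀ hhα).1 hlt
    calc ((c:ℝ)+1)⁻¹ * h ^ α ≤ |f (t + h) - f t| := this.le
      _ ≤ W (t + h) - W t := hincr t h ht0 hhmem.1
  calc dimH {t : ℝ | 0 ≤ t ∧ 0 < Filter.limsup
        (fun h : ℝ => ((|f (t + h) - f t| / h ^ α : ℝ) : EReal))
        (nhdsWithin 0 (Set.Ioi 0))}
      ≤ dimH (⋃ nc : ℕ × ℕ, E nc.1 nc.2) := dimH_mono hsub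
    _ = ⨆ nc : ℕ × ℕ, dimH (E nc.1 nc.2) := dimH_iUnion _
    _ ≤ ENNReal.ofReal α := by
        refine iSup_le fun nc => ?_
        refine dimH_le fun d' hd' => ?_
        by_contra hcon
        push_neg at hcon
        have hαd : α < (d' : ℝ) := by
          have h1 : ENNReal.ofReal α < (d' : ℝ≥0∞) := hcon
          rw [← ENNReal.ofReal_coe_nnreal] at h1
          have hd'pos : (0:ℝ) < (d' : ℝ) := by
            have h2 : (0:ℝ≥0∞) < ENNReal.ofReal (d' : ℝ) :=
              lt_trans (ENNReal.ofReal_pos.2 hα0) h1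
            exact ENNReal.ofReal_pos.1 h2
          exact (ENNReal.ofReal_lt_ofReal_iff hd'pos).1 h1
        have hzero : μH[(d' : ℝ)] (E nc.1 nc.2) = 0 := by
          refine key_zero hW (n := (nc.1 : ℝ)) (fun t ht => ht.1)
            (c := ((nc.2:ℝ)+1)⁻¹) (by positivity) hα0 hαd ?_
          exact fun t ht => ht.2
        rw [hzero] at hd'
        exact ENNReal.zero_ne_top hd'
end
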